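/- arXiv:1711.01668 — 5 statements merged into one kernel-verified Lean document; each statement's English description precedes it below -/
import Mathlib

section
/- Let N be a nontrivial normal subgroup of the rational group R, and let f₁ ∈ N satisfy f₁(I₀) ∩ I₀ = ∅. Then for all g, h ∈ R, the element ([g,h], 1) lies in N, where [g,h] = g⁻¹h⁻¹gh and (k,1) denotes the homeomorphism acting as k on I₀ and identity on I₁. -/
/-- The Cantor space of infinite binary sequences. -/
abbrev Cantor : Type := ℕ → Bool

/-- Prepend a finite binary word to an infinite binary sequence. -/
def prepend (α : List Bool) (ψ : Cantor) : Cantor :=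
  fun n => if h : n < α.length then α.get ⟨n, h⟩ else ψ (n - α.length)

/-- The basic clopen cone `I_α` of sequences beginning with the finite word `α`. -/
def cone (α : List Bool) : Set Cantor :=
  {ψ | ∀ i (h : i < α.length), ψ i = α.get ⟨i, h⟩}

/-- An asynchronous binary transducer with state set `S` (the initial state `s0`,
the transition function `t` and the output function `o`). -/
structure Transducer (S : Type) where
  s0 : S
  t : S → Bool → S
  o : S → Bool → List Bool

/-- The extended transition function on finite binary words. -/
def Transducer.tStar {S : Type} (T : Transducer S) : S → List Bool → S
  | s, [] => s
  | s, b :: α => T.tStar (T.t s b) α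

/-- The extended output function on finite binary words. -/
def Transducer.oStar {S : Type} (T : Transducer S) : S → List Bool → List Bool
  | _, [] => []
  | s, b :: α => T.o s b ++ T.oStar (T.t s b) α

/-- The length-`n` prefix of an infinite binary sequence, as a finite word. -/
def prefixWord (ψ : Cantor) (n : ℕ) : List Bool := (List.range n).map ψ

/-- `l` is a prefix of the infinite sequence `ψ`. -/
def IsPrefixOf (l : List Bool) (ψ : Cantor) : Prop :=
  ∀ i (h : i < l.length), l.get ⟨i, h⟩ = ψ i

/-- The transducer `T` computes the map `f` on infinite binary sequences: on every input
`ψ` the finite outputs along the run are prefixes of `f ψ`, and their lengths tend to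
infinity, so that the infinite concatenated output is exactly `f ψ`. -/
def Transducer.Computes {S : Type} (T : Transducer S) (f : Cantor → Cantor) : Prop :=
  ∀ ψ : Cantor, (∀ n, IsPrefixOf (T.oStar T.s0 (prefixWord ψ n)) (f ψ)) ∧
    (∀ k, ∃ n, k ≤ (T.oStar T.s0 (prefixWord ψ n)).length)

/-- A homeomorphism of the Cantor space is rational if some asynchronous binary
transducer (with finitely many states) computes it. -/
def IsRational (f : Cantor ≃ₜ Cantor) : Prop :=
  ∃ (n : ℕ) (T : Transducer (Fin n)), T.Computes ⇑f

/-- `r` is the restriction `f|_α`: there is a finite word `β` (necessarily the longest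
common prefix of `f(I_α)`) with `f(αω) = β · r(ω)` for all `ω`, where maximality of `β`
is expressed by saying that the outputs of `r` do not all share their first digit. -/
def IsRestrictionAt (f : Cantor ≃ₜ Cantor) (α : List Bool) (r : Cantor → Cantor) : Prop :=
  ∃ β : List Bool, (∀ ψ : Cantor, f (prepend α ψ) = prepend β (r ψ)) ∧
    ∃ ψ ψ' : Cantor, r ψ 0 ≠ r ψ' 0

/-- The set of all restrictions of `f` as `α` ranges over finite binary words. -/
def restrictions (f : Cantor ≃ₜ Cantor) : Set (Cantor → Cantor) :=
  {r | ∃ α : List Bool, IsRestrictionAt f α r}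

/-- `f` has finitely many distinct restrictions. -/
def FinitelyManyRestrictions (f : Cantor ≃ₜ Cantor) : Prop :=
  (restrictions f).Finite

/-- The group of self-homeomorphisms of the Cantor space, with `(f * g) x = f (g x)`. -/
instance : Group (Cantor ≃ₜ Cantor) where
  mul f g := g.trans f
  one := Homeomorph.refl _
  inv := Homeomorph.symm
  mul_assoc _ _ _ := rfl
  one_mul _ := rfl
  mul_one _ := rfl
  inv_mul_cancel f := Homeomorph.ext fun x => f.symm_apply_apply x

/-- `k` is the homeomorphism `(f, g)`, acting as `f` on `I₀` and as `g` on `I₁`. -/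
def IsPair (k f g : Cantor ≃ₜ Cantor) : Prop :=
  (∀ ζ : Cantor, k (prepend [false] ζ) = prepend [false] (f ζ)) ∧
  (∀ ζ : Cantor, k (prepend [true] ζ) = prepend [true] (g ζ))

/-- `x₀` is the first generator of Thompson's group `F`. -/
def IsX0 (x₀ : Cantor ≃ₜ Cantor) : Prop :=
  (∀ ζ : Cantor, x₀ (prepend [false, false] ζ) = prepend [false] ζ) ∧
  (∀ ζ : Cantor, x₀ (prepend [false, true] ζ) = prepend [true, false] ζ) ∧
  (∀ ζ : Cantor, x₀ (prepend [true] ζ) = prepend [true, true] ζ)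

/-- `f` has small support: it is the identity outside a proper nonempty clopen set. -/
def HasSmallSupport (f : Cantor ≃ₜ Cantor) : Prop :=
  ∃ E : Set Cantor, IsClopen E ∧ E.Nonempty ∧ E ≠ Set.univ ∧ ∀ ψ ∉ E, f ψ = ψ

/-- A group `G` of homeomorphisms of the Cantor space is full if every homeomorphism
that locally agrees with `G` belongs to `G`. -/
def Full (G : Subgroup (Cantor ≃ₜ Cantor)) : Prop :=
  ∀ h : Cantor ≃ₜ Cantor,
    (∀ p : Cantor, ∃ U : Set Cantor, IsOpen U ∧ p ∈ U ∧ ∃ g ∈ G, ∀ x ∈ U, h x = g x) →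
    h ∈ G

/-- A group `G` of homeomorphisms of the Cantor space is flexible if for all proper
nonempty clopen sets `E₁, E₂` there is `g ∈ G` with `g(E₁) ⊆ E₂`. -/
def Flexible (G : Subgroup (Cantor ≃ₜ Cantor)) : Prop :=
  ∀ E₁ E₂ : Set Cantor, IsClopen E₁ → E₁.Nonempty → E₁ ≠ Set.univ →
    IsClopen E₂ → E₂.Nonempty → E₂ ≠ Set.univ →
    ∃ g ∈ G, ⇑g '' E₁ ⊆ E₂

/-- The map flipping every `p`-th binary digit (digits are indexed from 1, so the
digit at index `n : ℕ` is the `(n+1)`-st digit). -/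
def flipFun (p : ℕ) (ψ : Cantor) : Cantor :=
  fun n => if p ∣ (n + 1) then !(ψ n) else ψ n

/-! ### Auxiliary material -/

namespace Statement11Aux

@[simp] lemma hmul_apply (f g : Cantor ≃ₜ Cantor) (x : Cantor) : (f * g) x = f (g x) := rfl

@[simp] lemma hinv_apply (f : Cantor ≃ₜ Cantor) (x : Cantor) : (f⁻¹) x = f.symm x := rfl

@[simp] lemma hone_apply (x : Cantor) : (1 : Cantor ≃ₜ Cantor) x = x := rfl

/-- The tail of an infinite binary sequence. -/
def tl (x : Cantor) : Cantor := fun n => x (n + 1)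

@[simp] lemma prepend_single_zero (b : Bool) (ζ : Cantor) : prepend [b] ζ 0 = b := by
  simp [prepend]

@[simp] lemma prepend_single_succ (b : Bool) (ζ : Cantor) (n : ℕ) :
    prepend [b] ζ (n + 1) = ζ n := by
  simp [prepend]

@[simp] lemma tl_prepend_single (b : Bool) (ζ : Cantor) : tl (prepend [b] ζ) = ζ := by
  funext n; simp [tl]

lemma prepend_tl (x : Cantor) : prepend [x 0] (tl x) = x := by
  funext n
  cases n with
  | zero => simp
  | succ m => simp [tl]

lemma pair_apply_false {k f g : Cantor ≃ₜ Cantor} (hk : IsPair k f g) {x : Cantor}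
    (hx : x 0 = false) : k x = prepend [false] (f (tl x)) := by
  conv_lhs => rw [← prepend_tl x, hx]
  exact hk.1 (tl x)

lemma pair_apply_true {k f g : Cantor ≃ₜ Cantor} (hk : IsPair k f g) {x : Cantor}
    (hx : x 0 = true) : k x = prepend [true] (g (tl x)) := by
  conv_lhs => rw [← prepend_tl x, hx]
  exact hk.2 (tl x)

lemma pair_inv {k f g : Cantor ≃ₜ Cantor} (hk : IsPair k f g) : IsPair k⁻¹ f⁻¹ g⁻¹ := by
  constructor
  · intro ζ
    have h1 := hk.1 (f.symm ζ)
    rw [Homeomorph.apply_symm_apply] at h1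
    simp only [hinv_apply]
    rw [← h1, Homeomorph.symm_apply_apply]
  · intro ζ
    have h1 := hk.2 (g.symm ζ)
    rw [Homeomorph.apply_symm_apply] at h1
    simp only [hinv_apply]
    rw [← h1, Homeomorph.symm_apply_apply]

lemma pair_apply_true_id {k f : Cantor ≃ₜ Cantor} (hk : IsPair k f 1) {x : Cantor}
    (hx : x 0 = true) : k x = x := by
  rw [pair_apply_true hk hx, hone_apply, ← prepend_tl x, hx, tl_prepend_single]

lemma pair_zero_false {k f g : Cantor ≃ₜ Cantor} (hk : IsPair k f g) {x : Cantor}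
    (hx : x 0 = false) : k x 0 = false := by
  rw [pair_apply_false hk hx]; simp

/-- The underlying map of the pair `(g, 1)`. -/
def pairFun (g : Cantor → Cantor) (x : Cantor) : Cantor :=
  if x 0 = false then prepend [false] (g (tl x)) else x

lemma continuous_prepend_single (b : Bool) : Continuous (prepend [b]) := by
  apply continuous_pi
  intro n
  cases n with
  | zero => simpa using continuous_const
  | succ m =>
    simp only [prepend_single_succ]
    exact continuous_apply m

lemma continuous_tl : Continuous tl := by
  apply continuous_pi
  intro n
  exact continuous_apply (n + 1)

lemma continuous_pairFun {g : Cantor → Cantor} (hg : Continuous g) :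
    Continuous (pairFun g) := by
  have hcl : IsClopen {x : Cantor | x 0 = false} := by
    have h : {x : Cantor | x 0 = false} = (fun x : Cantor => x 0) ⁻¹' {false} := by
      ext x; simp
    rw [h]
    exact (isClopen_discrete _).preimage (continuous_apply 0)
  unfold pairFun
  apply Continuous.if
  · intro a ha
    rw [hcl.frontier_eq] at ha
    exact absurd ha (Set.notMem_empty a)
  · exact (continuous_prepend_single false).comp (hg.comp continuous_tl)
  · exact continuous_id

/-- The homeomorphism `(g, 1)`. -/
def pairHomeo (g : Cantor ≃ₜ Cantor) : Cantor ≃ₜ Cantor where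
  toFun := pairFun g
  invFun := pairFun g.symm
  left_inv := by
    intro x
    by_cases hx : x 0 = false
    · have h1 : pairFun g x = prepend [false] (g (tl x)) := if_pos hx
      have h2 : pairFun g.symm (prepend [false] (g (tl x)))
          = prepend [false] (g.symm (g (tl x))) := by
        show (if _ then _ else _) = _
        rw [if_pos (prepend_single_zero false _), tl_prepend_single]
      rw [h1, h2, Homeomorph.symm_apply_apply]
      conv_rhs => rw [← prepend_tl x, hx]
    · have h1 : pairFun g x = x := if_neg hx
      rw [h1]
      exact if_neg hx
  right_inv := by
    intro x
    by_cases hx : x 0 = false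
    · have h1 : pairFun g.symm x = prepend [false] (g.symm (tl x)) := if_pos hx
      have h2 : pairFun g (prepend [false] (g.symm (tl x)))
          = prepend [false] (g (g.symm (tl x))) := by
        show (if _ then _ else _) = _
        rw [if_pos (prepend_single_zero false _), tl_prepend_single]
      rw [h1, h2, Homeomorph.apply_symm_apply]
      conv_rhs => rw [← prepend_tl x, hx]
    · have h1 : pairFun g.symm x = x := if_neg hx
      rw [h1]
      exact if_neg hx
  continuous_toFun := continuous_pairFun g.continuous
  continuous_invFun := continuous_pairFun g.symm.continuous

@[simp] lemma pairHomeo_apply (g : Cantor ≃ₜ Cantor) (x : Cantor) :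
    pairHomeo g x = pairFun g x := rfl

lemma isPair_pairHomeo (g : Cantor ≃ₜ Cantor) : IsPair (pairHomeo g) g 1 := by
  constructor
  · intro ζ
    simp [pairFun]
  · intro ζ
    simp [pairFun]

/-! ### Transducer for the pair `(g, 1)` -/

/-- Transducer computing `(g, 1)` from a transducer computing `g`:
state `0` is initial, state `1` is the identity state, state `i + 2` simulates
state `i` of `T`. -/
def pairT {n : ℕ} (T : Transducer (Fin n)) : Transducer (Fin (n + 2)) where
  s0 := ⟨0, by omega⟩
  t s b :=
    if hs0 : s.val = 0 then (if b then ⟨1, by omega⟩ else T.s0.succ.succ)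
    else if hs1 : s.val = 1 then ⟨1, by omega⟩
    else (T.t ⟨s.val - 2, by have := s.isLt; omega⟩ b).succ.succ
  o s b :=
    if hs : s.val ≤ 1 then [b]
    else T.o ⟨s.val - 2, by have := s.isLt; omega⟩ b

lemma pairT_tStar_emb {n : ℕ} (T : Transducer (Fin n)) (i : Fin n) (α : List Bool) :
    (pairT T).tStar i.succ.succ α = (T.tStar i α).succ.succ := by
  induction α generalizing i with
  | nil => rfl
  | cons b β ih =>
    have ht : (pairT T).t i.succ.succ b = (T.t i b).succ.succ := by
      obtain ⟨m, hm⟩ := i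
      simp [pairT, Fin.succ]
    simp only [Transducer.tStar, ht, ih]

lemma pairT_oStar_emb {n : ℕ} (T : Transducer (Fin n)) (i : Fin n) (α : List Bool) :
    (pairT T).oStar i.succ.succ α = T.oStar i α := by
  induction α generalizing i with
  | nil => rfl
  | cons b β ih =>
    have ht : (pairT T).t i.succ.succ b = (T.t i b).succ.succ := by
      obtain ⟨m, hm⟩ := i
      simp [pairT, Fin.succ]
    have ho : (pairT T).o i.succ.succ b = T.o i b := by
      obtain ⟨m, hm⟩ := i
      simp [pairT, Fin.succ]
    simp only [Transducer.oStar, ht, ho, ih]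

lemma pairT_oStar_id {n : ℕ} (T : Transducer (Fin n)) (α : List Bool) :
    (pairT T).oStar ⟨1, by omega⟩ α = α := by
  induction α with
  | nil => rfl
  | cons b β ih =>
    have ht : (pairT T).t ⟨1, by omega⟩ b = ⟨1, by omega⟩ := by simp [pairT]
    have ho : (pairT T).o ⟨1, by omega⟩ b = [b] := by simp [pairT]
    simp only [Transducer.oStar, ht, ho, ih]
    rfl

lemma prefixWord_succ (ψ : Cantor) (m : ℕ) :
    prefixWord ψ (m + 1) = ψ 0 :: prefixWord (tl ψ) m := by
  simp [prefixWord, List.range_succ_eq_map, Function.comp, tl]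

lemma pairT_oStar_false {n : ℕ} (T : Transducer (Fin n)) {ψ : Cantor} (hψ : ψ 0 = false)
    (m : ℕ) :
    (pairT T).oStar (pairT T).s0 (prefixWord ψ (m + 1)) =
      false :: T.oStar T.s0 (prefixWord (tl ψ) m) := by
  rw [prefixWord_succ, hψ]
  show (pairT T).o _ false ++ (pairT T).oStar ((pairT T).t _ false) _ = _
  have ht : (pairT T).t (pairT T).s0 false = T.s0.succ.succ := by simp [pairT]
  have ho : (pairT T).o (pairT T).s0 false = [false] := by simp [pairT]
  rw [ht, ho, pairT_oStar_emb]
  rfl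

lemma pairT_oStar_true {n : ℕ} (T : Transducer (Fin n)) {ψ : Cantor} (hψ : ψ 0 = true)
    (m : ℕ) :
    (pairT T).oStar (pairT T).s0 (prefixWord ψ m) = prefixWord ψ m := by
  cases m with
  | zero => rfl
  | succ m =>
    rw [prefixWord_succ, hψ]
    show (pairT T).o _ true ++ (pairT T).oStar ((pairT T).t _ true) _ = _
    have ht : (pairT T).t (pairT T).s0 true = ⟨1, by omega⟩ := by simp [pairT]
    have ho : (pairT T).o (pairT T).s0 true = [true] := by simp [pairT]
    rw [ht, ho, pairT_oStar_id]
    rfl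

lemma isRational_pairHomeo {g : Cantor ≃ₜ Cantor} (hg : IsRational g) :
    IsRational (pairHomeo g) := by
  obtain ⟨n, T, hT⟩ := hg
  refine ⟨n + 2, pairT T, fun ψ => ?_⟩
  by_cases hψ : ψ 0 = false
  · constructor
    · intro m
      cases m with
      | zero => intro i hi; simp [Transducer.oStar, prefixWord] at hi
      | succ m =>
        rw [pairT_oStar_false T hψ]
        intro i hi
        have hfψ : pairHomeo g ψ = prepend [false] (g (tl ψ)) := by
          simp [pairFun, hψ]
        rw [hfψ]
        cases i with
        | zero => simp
        | succ j =>
          simp only [List.length_cons] at hi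
          have hj : j < (T.oStar T.s0 (prefixWord (tl ψ) m)).length := by omega
          have := (hT (tl ψ)).1 m j hj
          simpa using this
    · intro k
      obtain ⟨m, hm⟩ := (hT (tl ψ)).2 k
      refine ⟨m + 1, ?_⟩
      rw [pairT_oStar_false T hψ]
      simp only [List.length_cons]
      omega
  · have hψ' : ψ 0 = true := by
      cases h : ψ 0 <;> simp_all
    constructor
    · intro m
      rw [pairT_oStar_true T hψ']
      intro i hi
      have hfψ : pairHomeo g ψ = ψ := by simp [pairFun, hψ]
      rw [hfψ]
      simp only [prefixWord]
      rw [List.get_eq_getElem]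
      simp
    · intro k
      refine ⟨k, ?_⟩
      rw [pairT_oStar_true T hψ']
      simp [prefixWord]

end Statement11Aux

open Statement11Aux in
/-- if `N` is a nontrivial normal subgroup of `R` and `f₁ ∈ N` maps `I₀`
off itself, then `([g, h], 1) ∈ N` for all `g, h ∈ R`, where `[g, h] = g⁻¹h⁻¹gh`. -/
theorem commutator_pair_mem_normal (R : Subgroup (Cantor ≃ₜ Cantor))
    (hR : ∀ f : Cantor ≃ₜ Cantor, f ∈ R ↔ IsRational f)
    (N : Subgroup ↥R) (hN : N.Normal) (hNt : N ≠ ⊥)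
    (f₁ : ↥R) (hf₁ : f₁ ∈ N)
    (hdisj : Disjoint (⇑(f₁ : Cantor ≃ₜ Cantor) '' cone [false]) (cone [false])) :
    ∀ g h k : ↥R,
      IsPair (k : Cantor ≃ₜ Cantor) ((g⁻¹ * h⁻¹ * g * h : ↥R) : Cantor ≃ₜ Cantor) 1 →
      k ∈ N := by
  intro g h k hk
  set g₀ : Cantor ≃ₜ Cantor := (g : Cantor ≃ₜ Cantor) with hg₀
  set h₀ : Cantor ≃ₜ Cantor := (h : Cantor ≃ₜ Cantor) with hh₀
  set F : Cantor ≃ₜ Cantor := (f₁ : Cantor ≃ₜ Cantor) with hF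
  -- the pairs (g,1) and (h,1) are rational, hence in R
  have haR : pairHomeo g₀ ∈ R := (hR _).2 (isRational_pairHomeo ((hR g₀).1 g.2))
  have hbR : pairHomeo h₀ ∈ R := (hR _).2 (isRational_pairHomeo ((hR h₀).1 h.2))
  set a : ↥R := ⟨pairHomeo g₀, haR⟩ with ha_def
  set b : ↥R := ⟨pairHomeo h₀, hbR⟩ with hb_def
  set a' : ↥R := a * f₁ * a⁻¹ * f₁⁻¹ with ha'_def
  have ha'N : a' ∈ N := by
    have h1 : a * f₁ * a⁻¹ ∈ N := hN.conj_mem f₁ hf₁ a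
    exact mul_mem h1 (inv_mem hf₁)
  -- homeomorphism-level objects
  set A : Cantor ≃ₜ Cantor := pairHomeo g₀ with hA_def
  set B : Cantor ≃ₜ Cantor := pairHomeo h₀ with hB_def
  set A' : Cantor ≃ₜ Cantor := A * F * A⁻¹ * F⁻¹ with hA'_def
  have hA : IsPair A g₀ 1 := isPair_pairHomeo g₀
  have hB : IsPair B h₀ 1 := isPair_pairHomeo h₀
  have hAinv : IsPair A⁻¹ g₀⁻¹ 1 := by
    have := pair_inv hA; rwa [inv_one] at this
  have hBinv : IsPair B⁻¹ h₀⁻¹ 1 := by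
    have := pair_inv hB; rwa [inv_one] at this
  have mem_cone : ∀ x : Cantor, x ∈ cone [false] ↔ x 0 = false := by
    intro x
    constructor
    · intro hx
      exact hx 0 (by simp)
    · intro hx i hi
      simp only [List.length_singleton, Nat.lt_one_iff] at hi
      subst hi
      exact hx
  have hd : ∀ x : Cantor, x 0 = false → F x 0 = true := by
    intro x hx
    by_contra hcon
    have hFx : F x 0 = false := by cases hc : F x 0 <;> simp_all
    exact Set.disjoint_left.mp hdisj ⟨x, (mem_cone x).2 hx, rfl⟩ ((mem_cone _).2 hFx)
  have hdinv : ∀ x : Cantor, x 0 = false → F.symm x 0 = true := by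
    intro x hx
    by_contra hcon
    have hFx : F.symm x 0 = false := by cases hc : F.symm x 0 <;> simp_all
    refine Set.disjoint_left.mp hdisj ⟨F.symm x, (mem_cone _).2 hFx, ?_⟩ ((mem_cone _).2 hx)
    exact F.apply_symm_apply x
  -- A' agrees with A on I₀
  have hA'_on : ∀ x : Cantor, x 0 = false → A' x = A x := by
    intro x hx
    show A (F (A⁻¹ (F.symm x))) = A x
    rw [pair_apply_true_id hAinv (hdinv x hx), F.apply_symm_apply]
  -- A'⁻¹ agrees with A⁻¹ on I₀
  have hA'inv_eq : A'⁻¹ = F * A * F⁻¹ * A⁻¹ := by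
    rw [hA'_def]; group
  have hA'inv_on : ∀ x : Cantor, x 0 = false → A'⁻¹ x = A⁻¹ x := by
    intro x hx
    rw [hA'inv_eq]
    show F (A (F.symm (A⁻¹ x))) = A⁻¹ x
    have h1 : A⁻¹ x 0 = false := pair_zero_false hAinv hx
    rw [pair_apply_true_id hA (hdinv _ h1), F.apply_symm_apply]
  -- A' maps I₁ into I₁
  have hA'_true : ∀ x : Cantor, x 0 = true → A' x 0 = true := by
    intro x hx
    show A (F (A⁻¹ (F.symm x))) 0 = true
    cases hz : F.symm x 0 with
    | false =>
      have h1 : A⁻¹ (F.symm x) 0 = false := pair_zero_false hAinv hz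
      have h2 : F (A⁻¹ (F.symm x)) 0 = true := hd _ h1
      rw [pair_apply_true_id hA h2]
      exact h2
    | true =>
      rw [pair_apply_true_id hAinv hz, F.apply_symm_apply,
        pair_apply_true_id hA hx]
      exact hx
  -- the key identity: k = [a', b]
  have hkey : k = a'⁻¹ * b⁻¹ * a' * b := by
    apply Subtype.ext
    have hcoe : ((a'⁻¹ * b⁻¹ * a' * b : ↥R) : Cantor ≃ₜ Cantor)
        = A'⁻¹ * B⁻¹ * A' * B := by
      push_cast [ha'_def]
      rfl
    rw [hcoe]
    apply Homeomorph.ext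
    intro x
    cases hx : x 0 with
    | true =>
      have e1 : B x = x := pair_apply_true_id hB hx
      have e2 : B⁻¹ (A' x) = A' x := pair_apply_true_id hBinv (hA'_true x hx)
      have lhs : (k : Cantor ≃ₜ Cantor) x = x := pair_apply_true_id hk hx
      calc (k : Cantor ≃ₜ Cantor) x = x := lhs
        _ = A'.symm (A' x) := (A'.symm_apply_apply x).symm
        _ = (A'⁻¹ * B⁻¹ * A' * B) x := by
            show _ = A'.symm (B⁻¹ (A' (B x)))
            rw [e1, e2]
    | false =>
      have e1 : B x = prepend [false] (h₀ (tl x)) := pair_apply_false hB hx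
      have e2 : A' (B x) = prepend [false] (g₀ (h₀ (tl x))) := by
        rw [e1, hA'_on _ (by simp), hA.1]
      have e3 : B⁻¹ (A' (B x)) = prepend [false] (h₀.symm (g₀ (h₀ (tl x)))) := by
        rw [e2]
        exact hBinv.1 _
      have e4 : A'⁻¹ (B⁻¹ (A' (B x))) =
          prepend [false] (g₀.symm (h₀.symm (g₀ (h₀ (tl x))))) := by
        rw [e3, hA'inv_on _ (by simp)]
        exact hAinv.1 _
      have lhs : (k : Cantor ≃ₜ Cantor) x =
          prepend [false] (g₀.symm (h₀.symm (g₀ (h₀ (tl x))))) := by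
        rw [pair_apply_false hk hx]
        have hc : ((g⁻¹ * h⁻¹ * g * h : ↥R) : Cantor ≃ₜ Cantor)
            = g₀⁻¹ * h₀⁻¹ * g₀ * h₀ := by push_cast; rfl
        rw [hc]
        rfl
      rw [lhs]
      exact e4.symm
  rw [hkey]
  have h2 : b⁻¹ * a' * b ∈ N := by
    have := hN.conj_mem a' ha'N b⁻¹
    rwa [inv_inv] at this
  have h3 : a'⁻¹ * (b⁻¹ * a' * b) ∈ N := mul_mem (inv_mem ha'N) h2
  simpa [mul_assoc] using h3
end

section
/- Let p be a prime, and let T = (S, s₀, t, o) be any asynchronous binary transducer computing the digit-flipping homeomorphism f_p (which flips every p-th digit of an infinite binary sequence). Then every accessible cycle of T has length divisible by p. That is, if t(s₀, α) = c for some finite word α and t(c, γ) = c for some nonempty finite word γ, then p divides |γ|. -/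
theorem tStar_append' {S : Type} (T : Transducer S) (s : S) (u v : List Bool) :
    T.tStar s (u ++ v) = T.tStar (T.tStar s u) v := by
  induction u generalizing s with
  | nil => rfl
  | cons b u ih => simp [Transducer.tStar, ih]

theorem oStar_append' {S : Type} (T : Transducer S) (s : S) (u v : List Bool) :
    T.oStar s (u ++ v) = T.oStar s u ++ T.oStar (T.tStar s u) v := by
  induction u generalizing s with
  | nil => rfl
  | cons b u ih => simp [Transducer.oStar, Transducer.tStar, ih]

theorem prefixWord_prepend' (α : List Bool) (ω : Cantor) (n : ℕ) :
    prefixWord (prepend α ω) (α.length + n) = α ++ prefixWord ω n := by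
  apply List.ext_getElem
  · simp [prefixWord]
  · intro i h1 h2
    simp only [prefixWord, List.getElem_map, List.getElem_range, prepend]
    by_cases h : i < α.length
    · simp [h, List.getElem_append_left, List.get_eq_getElem]
    · rw [dif_neg h, List.getElem_append_right (by omega)]
      simp [prefixWord]

theorem oStar_len_mono' {S : Type} (T : Transducer S) (ψ : Cantor) (m k : ℕ) :
    (T.oStar T.s0 (prefixWord ψ m)).length ≤ (T.oStar T.s0 (prefixWord ψ (m + k))).length := by
  have : prefixWord ψ (m + k) = prefixWord ψ m ++ (List.range k).map (fun j => ψ (m + j)) := by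
    simp [prefixWord, List.range_add, Function.comp]
  rw [this, oStar_append']
  simp

/-- every accessible cycle of a transducer computing the digit-flipping
homeomorphism `f_p` has length divisible by `p`. -/
theorem flip_cycles_divisible (p : ℕ) (hp : p.Prime) {S : Type} [Fintype S]
    (T : Transducer S) (hT : T.Computes (flipFun p)) :
    ∀ α γ : List Bool, γ ≠ [] → T.tStar (T.tStar T.s0 α) γ = T.tStar T.s0 α →
      p ∣ γ.length := by
  intro α γ hγ hcyc
  set c : S := T.tStar T.s0 α with hc
  set β : List Bool := T.oStar T.s0 α with hβ
  set δ : List Bool := T.oStar c γ with hδ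
  set L : ℕ := β.length with hL
  set d : ℕ := δ.length with hd
  set a : ℕ := α.length with ha
  set g : ℕ := γ.length with hg
  -- unbounded output lengths from state c
  have claimC : ∀ (ω : Cantor) (i : ℕ), ∃ n, i < (T.oStar c (prefixWord ω n)).length := by
    intro ω i
    obtain ⟨m, hm⟩ := (hT (prepend α ω)).2 (L + i + 1)
    have hmono := oStar_len_mono' T (prepend α ω) m a
    have h : L + i + 1 ≤ (T.oStar T.s0 (prefixWord (prepend α ω) (m + a))).length :=
      le_trans hm hmono
    rw [show m + a = a + m by omega] at h
    rw [ha, prefixWord_prepend', oStar_append', ← hβ, ← hc] at h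
    simp only [List.length_append] at h
    exact ⟨m, by omega⟩
  -- claim A
  have claimA : ∀ (ω : Cantor) (n i : ℕ) (h : i < (T.oStar c (prefixWord ω n)).length),
      (T.oStar c (prefixWord ω n))[i] = flipFun p (prepend α ω) (L + i) := by
    intro ω n i h
    have h1 := (hT (prepend α ω)).1 (a + n)
    rw [ha, prefixWord_prepend', oStar_append', ← hβ, ← hc] at h1
    have hlen : L + i < (β ++ T.oStar c (prefixWord ω n)).length := by
      simp only [List.length_append]; omega
    have h2 : (β ++ T.oStar c (prefixWord ω n))[L + i]'hlen
        = flipFun p (prepend α ω) (L + i) := h1 (L + i) hlen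
    rw [List.getElem_append_right (by omega)] at h2
    simpa only [show L + i - β.length = i from by omega] using h2
  -- claim B
  have claimB : ∀ (ω : Cantor) (n i : ℕ) (h : i < (T.oStar c (prefixWord ω n)).length),
      (T.oStar c (prefixWord ω n))[i] = flipFun p (prepend (α ++ γ) ω) (L + d + i) := by
    intro ω n i h
    have h1 := (hT (prepend (α ++ γ) ω)).1 ((α ++ γ).length + n)
    rw [prefixWord_prepend', oStar_append', oStar_append', tStar_append', hcyc,
      ← hβ, ← hc, ← hδ] at h1
    have hlen : L + d + i < ((β ++ δ) ++ T.oStar c (prefixWord ω n)).length := by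
      simp only [List.length_append]; omega
    have h2 : ((β ++ δ) ++ T.oStar c (prefixWord ω n))[L + d + i]'hlen
        = flipFun p (prepend (α ++ γ) ω) (L + d + i) := h1 (L + d + i) hlen
    rw [List.getElem_append_right (by simp only [List.length_append]; omega)] at h2
    simpa only [show L + d + i - (β ++ δ).length = i from by simp only [List.length_append]; omega]
      using h2
  -- key equality
  have key : ∀ (ω : Cantor) (i : ℕ),
      flipFun p (prepend α ω) (L + i) = flipFun p (prepend (α ++ γ) ω) (L + d + i) := by
    intro ω i
    obtain ⟨n, hn⟩ := claimC ω i
    rw [← claimA ω n i hn, ← claimB ω n i hn]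
  -- explicit form for large i
  have key2 : ∀ (ω : Cantor) (i : ℕ), a + g ≤ i →
      (if p ∣ L + i + 1 then !(ω (L + i - a)) else ω (L + i - a)) =
      (if p ∣ L + d + i + 1 then !(ω (L + d + i - (a + g))) else ω (L + d + i - (a + g))) := by
    intro ω i hi
    have hk := key ω i
    have e1 : prepend α ω (L + i) = ω (L + i - a) := by
      rw [prepend, dif_neg (by omega)]
    have e2 : prepend (α ++ γ) ω (L + d + i) = ω (L + d + i - (a + g)) := by
      rw [prepend, dif_neg (by simp only [List.length_append]; omega)]
      simp only [List.length_append]; rfl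
    simpa only [flipFun, e1, e2] using hk
  -- step 1 : d = g
  have hdg : d = g := by
    by_contra hne
    have h1 := key2 (fun _ => false) (a + g) le_rfl
    have h2 := key2 (fun m => decide (m = L + (a + g) - a)) (a + g) le_rfl
    simp only [] at h1 h2
    have e2 : decide ((L + d + (a + g) - (a + g) : ℕ) = L + (a + g) - a) = false := by
      simp only [decide_eq_false_iff_not]
      omega
    rw [e2] at h2
    split_ifs at h1 h2 <;> (revert h1 h2; decide)
  -- step 2 : p ∣ d
  rw [← hdg] at key2 ⊢
  have hp2 := hp.two_le
  obtain ⟨i, hile, hdvd⟩ : ∃ i, a + d ≤ i ∧ p ∣ L + i + 1 := by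
    have hmul : 2 * (L + a + d + 1) ≤ p * (L + a + d + 1) :=
      Nat.mul_le_mul hp2 le_rfl
    refine ⟨p * (L + a + d + 1) - (L + 1), by omega, ?_⟩
    rw [show L + (p * (L + a + d + 1) - (L + 1)) + 1 = p * (L + a + d + 1) from by omega]
    exact Dvd.intro _ rfl
  have h1 := key2 (fun _ => false) i hile
  rw [if_pos hdvd] at h1
  have hQ : p ∣ L + d + i + 1 := by
    by_contra hQ
    rw [if_neg hQ] at h1
    simp at h1
  rw [show L + d + i + 1 = (L + i + 1) + d from by omega] at hQ
  exact (Nat.dvd_add_right hdvd).mp hQ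
end

section
/- Let p be prime, and let f, f' be rational homeomorphisms of {0,1}^ω such that f has a transducer with an accessible cycle of length not divisible by p, and f' has a transducer with fewer than p states. Then the composition f' ∘ f has a transducer with an accessible cycle of length not divisible by p. -/
namespace Transducer

variable {S S' : Type}

theorem tStar_append (T : Transducer S) (s : S) (u v : List Bool) :
    T.tStar s (u ++ v) = T.tStar (T.tStar s u) v := by
  induction u generalizing s with
  | nil => rfl
  | cons b u ih => simp [Transducer.tStar, ih]

theorem oStar_append (T : Transducer S) (s : S) (u v : List Bool) :
    T.oStar s (u ++ v) = T.oStar s u ++ T.oStar (T.tStar s u) v := by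
  induction u generalizing s with
  | nil => rfl
  | cons b u ih => simp [Transducer.oStar, Transducer.tStar, ih]

/-- The product transducer computing a composition. -/
def prod (T : Transducer S) (T' : Transducer S') : Transducer (S × S') where
  s0 := (T.s0, T'.s0)
  t := fun s b => (T.t s.1 b, T'.tStar s.2 (T.o s.1 b))
  o := fun s b => T'.oStar s.2 (T.o s.1 b)

theorem prod_tStar (T : Transducer S) (T' : Transducer S') (s : S) (s' : S')
    (w : List Bool) :
    (T.prod T').tStar (s, s') w = (T.tStar s w, T'.tStar s' (T.oStar s w)) := by
  induction w generalizing s s' with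
  | nil => rfl
  | cons b w ih =>
    show (T.prod T').tStar ((T.prod T').t (s, s') b) w = _
    rw [show (T.prod T').t (s, s') b = (T.t s b, T'.tStar s' (T.o s b)) from rfl, ih]
    simp [Transducer.tStar, Transducer.oStar, tStar_append]

theorem prod_oStar (T : Transducer S) (T' : Transducer S') (s : S) (s' : S')
    (w : List Bool) :
    (T.prod T').oStar (s, s') w = T'.oStar s' (T.oStar s w) := by
  induction w generalizing s s' with
  | nil => rfl
  | cons b w ih =>
    show (T.prod T').o (s, s') b ++ (T.prod T').oStar ((T.prod T').t (s, s') b) w = _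
    rw [show (T.prod T').t (s, s') b = (T.t s b, T'.tStar s' (T.o s b)) from rfl, ih]
    show T'.oStar s' (T.o s b) ++ _ = _
    rw [show T.oStar s (b :: w) = T.o s b ++ T.oStar (T.t s b) w from rfl,
      oStar_append]

/-- Transport a transducer along an equivalence of state sets. -/
def reindex (e : S ≃ S') (T : Transducer S) : Transducer S' where
  s0 := e T.s0
  t := fun s b => e (T.t (e.symm s) b)
  o := fun s b => T.o (e.symm s) b

theorem reindex_tStar (e : S ≃ S') (T : Transducer S) (s : S) (w : List Bool) :
    (reindex e T).tStar (e s) w = e (T.tStar s w) := by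
  induction w generalizing s with
  | nil => rfl
  | cons b w ih =>
    show (reindex e T).tStar ((reindex e T).t (e s) b) w = _
    rw [show (reindex e T).t (e s) b = e (T.t (e.symm (e s)) b) from rfl,
      e.symm_apply_apply, ih]
    rfl

theorem reindex_oStar (e : S ≃ S') (T : Transducer S) (s : S) (w : List Bool) :
    (reindex e T).oStar (e s) w = T.oStar s w := by
  induction w generalizing s with
  | nil => rfl
  | cons b w ih =>
    show (reindex e T).o (e s) b ++ (reindex e T).oStar ((reindex e T).t (e s) b) w = _
    rw [show (reindex e T).t (e s) b = e (T.t (e.symm (e s)) b) from rfl,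
      e.symm_apply_apply, ih]
    show T.o (e.symm (e s)) b ++ _ = _
    rw [e.symm_apply_apply]
    rfl

theorem oStar_prefix (T : Transducer S) (s : S) {u v : List Bool} (h : u <+: v) :
    T.oStar s u <+: T.oStar s v := by
  obtain ⟨w, rfl⟩ := h
  rw [oStar_append]
  exact ⟨_, rfl⟩

end Transducer

theorem prefixWord_length (ψ : Cantor) (n : ℕ) : (prefixWord ψ n).length = n := by
  simp [prefixWord]

theorem prefixWord_of_isPrefixOf {l : List Bool} {ψ : Cantor} (h : IsPrefixOf l ψ) :
    prefixWord ψ l.length = l := by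
  apply List.ext_get (by simp [prefixWord])
  intro i h1 h2
  have : (prefixWord ψ l.length).get ⟨i, h1⟩ = ψ i := by
    simp [prefixWord]
  rw [this, h i h2]

theorem prefixWord_prefix (ψ : Cantor) {m n : ℕ} (h : m ≤ n) :
    prefixWord ψ m <+: prefixWord ψ n := by
  have : prefixWord ψ m = (prefixWord ψ n).take m := by
    simp [prefixWord, ← List.map_take, List.take_range, Nat.min_eq_left h]
  rw [this]
  exact List.take_prefix _ _

theorem join_replicate_add {γ : List Bool} (a b : ℕ) :
    (List.replicate (a + b) γ).flatten =
      (List.replicate a γ).flatten ++ (List.replicate b γ).flatten := by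
  rw [List.replicate_add, List.flatten_append]

theorem length_join_replicate (γ : List Bool) (a : ℕ) :
    (List.replicate a γ).flatten.length = a * γ.length := by
  induction a with
  | zero => simp
  | succ a ih => simp [List.replicate_succ, ih, Nat.succ_mul, Nat.add_comm]

/-- if `f` has a transducer with an accessible cycle of length not
divisible by the prime `p`, and `f'` has a transducer with fewer than `p` states, then
`f' ∘ f` has a transducer with an accessible cycle of length not divisible by `p`. -/
theorem oblivious_comp (p : ℕ) (hp : p.Prime) (f f' : Cantor ≃ₜ Cantor)
    (hf : IsRational f) (hf' : IsRational f')
    (hT : ∃ (n : ℕ) (T : Transducer (Fin n)), T.Computes ⇑f ∧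
      ∃ α γ : List Bool, γ ≠ [] ∧ T.tStar (T.tStar T.s0 α) γ = T.tStar T.s0 α ∧
        ¬ p ∣ γ.length)
    (hT' : ∃ n' : ℕ, n' < p ∧ ∃ T' : Transducer (Fin n'), T'.Computes ⇑f') :
    ∃ (m : ℕ) (T'' : Transducer (Fin m)), T''.Computes ⇑(f' * f) ∧
      ∃ α γ : List Bool, γ ≠ [] ∧
        T''.tStar (T''.tStar T''.s0 α) γ = T''.tStar T''.s0 α ∧
        ¬ p ∣ γ.length := by
  obtain ⟨n, T, hTc, α, γ, hγne, hcyc, hγlen⟩ := hT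
  obtain ⟨n', hn'p, T', hT'c⟩ := hT'
  -- the product transducer, reindexed to a `Fin`
  set e : Fin n × Fin n' ≃ Fin (n * n') := finProdFinEquiv
  refine ⟨n * n', Transducer.reindex e (T.prod T'), ?_, ?_⟩
  · -- it computes f' ∘ f
    intro ψ
    have hs0 : (Transducer.reindex e (T.prod T')).s0 = e (T.prod T').s0 := rfl
    have key : ∀ w : List Bool,
        (Transducer.reindex e (T.prod T')).oStar (Transducer.reindex e (T.prod T')).s0 w
          = T'.oStar T'.s0 (T.oStar T.s0 w) := by
      intro w
      rw [hs0, Transducer.reindex_oStar]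
      exact Transducer.prod_oStar T T' T.s0 T'.s0 w
    have hff : ∀ ζ : Cantor, (f' * f) ζ = f' (f ζ) := fun _ => rfl
    constructor
    · intro m
      rw [key]
      have h1 : IsPrefixOf (T.oStar T.s0 (prefixWord ψ m)) (f ψ) := (hTc ψ).1 m
      have h2 := prefixWord_of_isPrefixOf h1
      rw [← h2, hff]
      exact (hT'c (f ψ)).1 _
    · intro k
      obtain ⟨N, hN⟩ := (hT'c (f ψ)).2 k
      obtain ⟨m, hm⟩ := (hTc ψ).2 N
      refine ⟨m, ?_⟩
      rw [key]
      have h1 : IsPrefixOf (T.oStar T.s0 (prefixWord ψ m)) (f ψ) := (hTc ψ).1 m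
      have h2 := prefixWord_of_isPrefixOf h1
      have hpre : prefixWord (f ψ) N <+: T.oStar T.s0 (prefixWord ψ m) := by
        rw [← h2]; exact prefixWord_prefix _ hm
      exact le_trans hN (Transducer.oStar_prefix T' T'.s0 hpre).length_le
  · -- it has an accessible cycle of length not divisible by p
    set s1 : Fin n := T.tStar T.s0 α with hs1
    set β : List Bool := T.oStar T.s0 α with hβ
    set δ : List Bool := T.oStar s1 γ with hδ
    -- iterating the cycle
    have htrep : ∀ j : ℕ, T.tStar s1 (List.replicate j γ).flatten = s1 := by
      intro j
      induction j with
      | zero => rfl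
      | succ j ih =>
        rw [List.replicate_succ, List.flatten_cons, Transducer.tStar_append, hcyc, ih]
    have horep : ∀ j : ℕ,
        T.oStar s1 (List.replicate j γ).flatten = (List.replicate j δ).flatten := by
      intro j
      induction j with
      | zero => rfl
      | succ j ih =>
        rw [List.replicate_succ, List.flatten_cons, Transducer.oStar_append, hcyc, ih,
          List.replicate_succ, List.flatten_cons]
    -- pigeonhole on the second-coordinate states
    have hcard : Fintype.card (Fin n') < Fintype.card (Fin (n' + 1)) := by
      simp
    obtain ⟨a, b, hab, heq⟩ := Fintype.exists_ne_map_eq_of_card_lt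
      (fun j : Fin (n' + 1) =>
        T'.tStar T'.s0 (β ++ (List.replicate (j : ℕ) δ).flatten)) hcard
    have main : ∀ a b : ℕ, a < b → b ≤ n' →
        T'.tStar T'.s0 (β ++ (List.replicate a δ).flatten) =
          T'.tStar T'.s0 (β ++ (List.replicate b δ).flatten) →
        ∃ α'' γ'' : List Bool, γ'' ≠ [] ∧
          (Transducer.reindex e (T.prod T')).tStar
              ((Transducer.reindex e (T.prod T')).tStar
                (Transducer.reindex e (T.prod T')).s0 α'') γ''
            = (Transducer.reindex e (T.prod T')).tStar
                (Transducer.reindex e (T.prod T')).s0 α'' ∧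
          ¬ p ∣ γ''.length := by
      intro a b hab hbn' hveq
      have hγpos : 0 < γ.length := List.length_pos_iff.mpr hγne
      have hmpos : 0 < b - a := Nat.sub_pos_of_lt hab
      refine ⟨α ++ (List.replicate a γ).flatten, (List.replicate (b - a) γ).flatten,
        ?_, ?_, ?_⟩
      · apply List.ne_nil_of_length_pos
        rw [length_join_replicate]
        exact Nat.mul_pos hmpos hγpos
      · have hs0 : (Transducer.reindex e (T.prod T')).s0 = e (T.prod T').s0 := rfl
        have hstate : (Transducer.reindex e (T.prod T')).tStar
            (Transducer.reindex e (T.prod T')).s0 (α ++ (List.replicate a γ).flatten)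
              = e (s1, T'.tStar T'.s0 (β ++ (List.replicate a δ).flatten)) := by
          rw [hs0, Transducer.reindex_tStar]
          congr 1
          have : (T.prod T').s0 = (T.s0, T'.s0) := rfl
          rw [this, Transducer.prod_tStar, Transducer.tStar_append, ← hs1, htrep,
            Transducer.oStar_append, ← hβ, ← hs1, horep]
        rw [hstate, Transducer.reindex_tStar, Transducer.prod_tStar, htrep, horep,
          ← Transducer.tStar_append, List.append_assoc, ← join_replicate_add,
          Nat.add_sub_cancel' (Nat.le_of_lt hab), ← hveq]
      · rw [length_join_replicate]
        intro hdvd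
        rcases (Nat.Prime.dvd_mul hp).mp hdvd with h | h
        · exact absurd h (Nat.not_dvd_of_pos_of_lt hmpos
            (lt_of_le_of_lt (le_trans (Nat.sub_le b a) hbn') hn'p))
        · exact hγlen h
    rcases Ne.lt_or_gt hab with hlt | hlt
    · exact main a b hlt (Nat.lt_succ_iff.mp b.isLt) heq
    · exact main b a hlt (Nat.lt_succ_iff.mp a.isLt) heq.symm
end

section
/- Let M be a submonoid of the rational group R that contains the digit-flipping homeomorphisms f_p for infinitely many primes p. Then M is not finitely generated: M is the ascending union of the proper submonoids M_{≤n} generated by elements of M representable by transducers with at most n states, and f_p ∉ M_{≤ p−1} for every prime p. -/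
/-- The submonoid of `M` generated by its elements representable by transducers with
at most `n` states. -/
def boundedGen (M : Submonoid (Cantor ≃ₜ Cantor)) (n : ℕ) : Submonoid (Cantor ≃ₜ Cantor) :=
  Submonoid.closure {f | f ∈ M ∧ ∃ m ≤ n, ∃ T : Transducer (Fin m), T.Computes ⇑f}

namespace NFGAux

open List

variable {S S' : Type}

theorem tStar_append (T : Transducer S) (s : S) (α β : List Bool) :
    T.tStar s (α ++ β) = T.tStar (T.tStar s α) β := by
  induction α generalizing s with
  | nil => rfl
  | cons b α ih => simp [Transducer.tStar, ih]

theorem oStar_append (T : Transducer S) (s : S) (α β : List Bool) :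
    T.oStar s (α ++ β) = T.oStar s α ++ T.oStar (T.tStar s α) β := by
  induction α generalizing s with
  | nil => rfl
  | cons b α ih => simp [Transducer.oStar, Transducer.tStar, ih]

@[simp] theorem prefixWord_length (ψ : Cantor) (n : ℕ) : (prefixWord ψ n).length = n := by
  simp [prefixWord]

theorem prefixWord_getElem (ψ : Cantor) {n i : ℕ} (h : i < (prefixWord ψ n).length) :
    (prefixWord ψ n)[i] = ψ i := by
  simp [prefixWord]

theorem prefixWord_succ (ψ : Cantor) (n : ℕ) :
    prefixWord ψ (n + 1) = prefixWord ψ n ++ [ψ n] := by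
  simp [prefixWord, List.range_succ]

theorem prefixWord_prepend (α : List Bool) (ζ : Cantor) (n : ℕ) :
    prefixWord (prepend α ζ) (α.length + n) = α ++ prefixWord ζ n := by
  induction n with
  | zero =>
    apply List.ext_getElem
    · simp
    · intro i h1 h2
      rw [prefixWord_getElem]
      simp at h2
      simp [prepend, dif_pos h2, prefixWord]
  | succ n ih =>
    have h1 : prepend α ζ (α.length + n) = ζ n := by
      simp [prepend]
    rw [show α.length + (n + 1) = (α.length + n) + 1 by omega, prefixWord_succ, ih, h1,
      prefixWord_succ, List.append_assoc]

theorem eq_prefixWord {l : List Bool} {ψ : Cantor} (h : IsPrefixOf l ψ) :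
    l = prefixWord ψ l.length := by
  apply List.ext_getElem
  · simp
  · intro i h1 h2
    rw [prefixWord_getElem]
    exact h i h1

theorem oStar_prefix_length_mono (T : Transducer S) (s : S) (ψ : Cantor) {n N : ℕ}
    (h : n ≤ N) :
    (T.oStar s (prefixWord ψ n)).length ≤ (T.oStar s (prefixWord ψ N)).length := by
  obtain ⟨d, rfl⟩ := Nat.exists_eq_add_of_le h
  clear h
  induction d with
  | zero => exact le_refl _
  | succ d ih =>
    rw [show n + (d+1) = (n+d)+1 by omega, prefixWord_succ, oStar_append]
    simpa using ih.trans (by simp)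

/-- Repeated word: `k` copies of `w`. -/
def wpow (w : List Bool) : ℕ → List Bool
  | 0 => []
  | k + 1 => wpow w k ++ w

@[simp] theorem wpow_length (w : List Bool) (k : ℕ) : (wpow w k).length = k * w.length := by
  induction k with
  | zero => simp [wpow]
  | succ k ih => simp [wpow, ih, Nat.succ_mul]

end NFGAux

namespace NFGAux

/-- `f` is oblivious to `p`: some finite transducer computing `f` has an accessible
cycle whose length is not divisible by `p`. -/
def Oblivious (p : ℕ) (f : Cantor → Cantor) : Prop :=
  ∃ (S : Type) (_ : Finite S) (T : Transducer S), T.Computes f ∧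
    ∃ u w : List Bool, w ≠ [] ∧ ¬ p ∣ w.length ∧
      T.tStar (T.tStar T.s0 u) w = T.tStar T.s0 u

/-- Lemma (c): any map computed by a transducer with fewer than `p` states is
oblivious to `p`. -/
theorem oblivious_of_small {p m : ℕ} (hm : m < p) (T : Transducer (Fin m))
    {f : Cantor → Cantor} (hT : T.Computes f) : Oblivious p f := by
  have hrep : ∀ k : ℕ, T.tStar T.s0 (List.replicate k false) =
      (fun i : ℕ => T.tStar T.s0 (List.replicate i false)) k := fun _ => rfl
  obtain ⟨i, j, hne, hij⟩ := Fintype.exists_ne_map_eq_of_card_lt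
    (fun i : Fin (m + 1) => T.tStar T.s0 (List.replicate i.1 false)) (by simp)
  rcases lt_or_gt_of_ne hne with h | h
  case _ =>
    refine ⟨Fin m, inferInstance, T, hT, List.replicate i.1 false,
      List.replicate (j.1 - i.1) false, ?_, ?_, ?_⟩
    · simp [List.replicate_eq_nil_iff]; omega
    · simp only [List.length_replicate]
      exact Nat.not_dvd_of_pos_of_lt (by omega) (by omega)
    · rw [← tStar_append, ← List.replicate_add,
        show i.1 + (j.1 - i.1) = j.1 by omega, hij]
  case _ =>
    refine ⟨Fin m, inferInstance, T, hT, List.replicate j.1 false,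
      List.replicate (i.1 - j.1) false, ?_, ?_, ?_⟩
    · simp [List.replicate_eq_nil_iff]; omega
    · simp only [List.length_replicate]
      exact Nat.not_dvd_of_pos_of_lt (by omega) (by omega)
    · rw [← tStar_append, ← List.replicate_add,
        show j.1 + (i.1 - j.1) = i.1 by omega, hij]

/-- The one-state identity transducer. -/
def idT : Transducer (Fin 1) := ⟨0, fun _ _ => 0, fun _ b => [b]⟩

theorem idT_oStar (s : Fin 1) (α : List Bool) : idT.oStar s α = α := by
  induction α generalizing s with
  | nil => rfl
  | cons b α ih =>
    show idT.o s b ++ idT.oStar (idT.t s b) α = b :: α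
    rw [ih]; rfl

theorem isPrefixOf_prefixWord (ψ : Cantor) (n : ℕ) : IsPrefixOf (prefixWord ψ n) ψ := by
  intro i h
  simp [List.get_eq_getElem, prefixWord_getElem]

theorem idT_computes : idT.Computes id := by
  intro ψ
  constructor
  · intro n
    rw [idT_oStar]
    exact isPrefixOf_prefixWord ψ n
  · intro k
    exact ⟨k, by rw [idT_oStar]; simp⟩

theorem oblivious_id {p : ℕ} (hp : p.Prime) : Oblivious p id := by
  refine ⟨Fin 1, inferInstance, idT, idT_computes, [], [false], by simp, ?_, rfl⟩
  simp only [List.length_cons, List.length_nil]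
  exact fun h => absurd (Nat.le_of_dvd Nat.one_pos h) (by have := hp.one_lt; omega)

end NFGAux

namespace NFGAux

variable {S S' : Type}

/-- Composite transducer computing `f' ∘ f` from transducers for `f` and `f'`. -/
def compT (T : Transducer S) (T' : Transducer S') : Transducer (S × S') where
  s0 := (T.s0, T'.s0)
  t := fun q b => (T.t q.1 b, T'.tStar q.2 (T.o q.1 b))
  o := fun q b => T'.oStar q.2 (T.o q.1 b)

theorem comp_tStar (T : Transducer S) (T' : Transducer S') (α : List Bool) (q : S × S') :
    (compT T T').tStar q α = (T.tStar q.1 α, T'.tStar q.2 (T.oStar q.1 α)) := by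
  induction α generalizing q with
  | nil => rfl
  | cons b α ih =>
    have h1 : (compT T T').tStar q (b :: α) =
        (compT T T').tStar (T.t q.1 b, T'.tStar q.2 (T.o q.1 b)) α := rfl
    rw [h1, ih]
    show _ = (T.tStar (T.t q.1 b) α, T'.tStar q.2 (T.o q.1 b ++ T.oStar (T.t q.1 b) α))
    rw [tStar_append]

theorem comp_oStar (T : Transducer S) (T' : Transducer S') (α : List Bool) (q : S × S') :
    (compT T T').oStar q α = T'.oStar q.2 (T.oStar q.1 α) := by
  induction α generalizing q with
  | nil => rfl
  | cons b α ih =>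
    have h1 : (compT T T').oStar q (b :: α) = T'.oStar q.2 (T.o q.1 b) ++
        (compT T T').oStar (T.t q.1 b, T'.tStar q.2 (T.o q.1 b)) α := rfl
    rw [h1, ih]
    show _ = T'.oStar q.2 (T.o q.1 b ++ T.oStar (T.t q.1 b) α)
    rw [oStar_append]

theorem comp_computes {T : Transducer S} {T' : Transducer S'} {f f' : Cantor → Cantor}
    (hT : T.Computes f) (hT' : T'.Computes f') : (compT T T').Computes (f' ∘ f) := by
  intro ψ
  constructor
  · intro n
    rw [comp_oStar]
    show IsPrefixOf (T'.oStar T'.s0 (T.oStar T.s0 (prefixWord ψ n))) ((f' ∘ f) ψ)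
    have h1 : T.oStar T.s0 (prefixWord ψ n) =
        prefixWord (f ψ) (T.oStar T.s0 (prefixWord ψ n)).length :=
      eq_prefixWord ((hT ψ).1 n)
    rw [h1]
    exact (hT' (f ψ)).1 _
  · intro k
    obtain ⟨n₁, hn₁⟩ := (hT' (f ψ)).2 k
    obtain ⟨n, hn⟩ := (hT ψ).2 n₁
    refine ⟨n, ?_⟩
    rw [comp_oStar]
    show k ≤ (T'.oStar T'.s0 (T.oStar T.s0 (prefixWord ψ n))).length
    have h1 : T.oStar T.s0 (prefixWord ψ n) =
        prefixWord (f ψ) (T.oStar T.s0 (prefixWord ψ n)).length :=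
      eq_prefixWord ((hT ψ).1 n)
    rw [h1]
    exact hn₁.trans (oStar_prefix_length_mono T' T'.s0 (f ψ) hn)

theorem wpow_tStar_iter {T : Transducer S} (T' : Transducer S') {s : S} {w : List Bool}
    (hs : T.tStar s w = s) (x : S') (k : ℕ) :
    (compT T T').tStar (s, x) (wpow w k) =
      (s, (fun y => T'.tStar y (T.oStar s w))^[k] x) := by
  induction k with
  | zero => rfl
  | succ k ih =>
    show (compT T T').tStar (s, x) (wpow w k ++ w) = _
    rw [tStar_append, ih, comp_tStar, Function.iterate_succ_apply']
    exact Prod.ext hs rfl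

/-- Lemma (b): composing an oblivious map with a map computed by a transducer with
fewer than `p` states yields an oblivious map. -/
theorem oblivious_comp {p : ℕ} (hp : p.Prime) {f f' : Cantor → Cantor}
    (hf : Oblivious p f) {m : ℕ} (hm : m < p) (T' : Transducer (Fin m))
    (hT' : T'.Computes f') : Oblivious p (f' ∘ f) := by
  obtain ⟨S, hS, T, hT, u, w, hw, hdvd, hcyc⟩ := hf
  refine ⟨S × Fin m, inferInstance, compT T T', comp_computes hT hT', ?_⟩
  set s : S := T.tStar T.s0 u with hs
  set x0 : Fin m := T'.tStar T'.s0 (T.oStar T.s0 u) with hx0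
  set g : Fin m → Fin m := fun y => T'.tStar y (T.oStar s w) with hg
  obtain ⟨i, j, hne, hij⟩ := Fintype.exists_ne_map_eq_of_card_lt
    (fun i : Fin (m + 1) => g^[i.1] x0) (by simp)
  have hq : ∀ k : ℕ, (compT T T').tStar (compT T T').s0 (u ++ wpow w k) = (s, g^[k] x0) := by
    intro k
    rw [tStar_append]
    have h0 : (compT T T').tStar (compT T T').s0 u = (s, x0) := comp_tStar T T' u _
    rw [h0, wpow_tStar_iter T' hcyc]
  have key : ∀ i j : ℕ, i < j → j ≤ m → g^[i] x0 = g^[j] x0 → (∃ u' w' : List Bool,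
      w' ≠ [] ∧ ¬ p ∣ w'.length ∧ (compT T T').tStar ((compT T T').tStar (compT T T').s0 u') w'
        = (compT T T').tStar (compT T T').s0 u') := by
    intro i j hlt hle heq
    refine ⟨u ++ wpow w i, wpow w (j - i), ?_, ?_, ?_⟩
    · intro hnil
      have h2 := congrArg List.length hnil
      rw [wpow_length] at h2
      simp at h2
      rcases h2 with h | h
      · omega
      · exact hw h
    · rw [wpow_length]
      intro hd
      rcases (Nat.Prime.dvd_mul hp).mp hd with h | h
      · exact absurd (Nat.le_of_dvd (by omega) h) (by omega)
      · exact hdvd h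
    · rw [hq i, wpow_tStar_iter T' hcyc, ← Function.iterate_add_apply,
        show (j - i) + i = j by omega, ← heq]
  rcases lt_or_gt_of_ne hne with h | h
  · obtain ⟨u', w', h1, h2, h3⟩ := key i.1 j.1 h (by omega) hij
    exact ⟨u', w', h1, h2, h3⟩
  · obtain ⟨u', w', h1, h2, h3⟩ := key j.1 i.1 h (by omega) hij.symm
    exact ⟨u', w', h1, h2, h3⟩

end NFGAux

namespace NFGAux

variable {S : Type}

theorem flip_prepend (p : ℕ) (α : List Bool) (ζ : Cantor) (j : ℕ) :
    flipFun p (prepend α ζ) (α.length + j) =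
      if p ∣ α.length + j + 1 then !(ζ j) else ζ j := by
  have h : prepend α ζ (α.length + j) = ζ j := by
    simp [prepend]
  show (if p ∣ α.length + j + 1 then !(prepend α ζ (α.length + j))
    else prepend α ζ (α.length + j)) = _
  rw [h]

theorem get_append_offset (l₁ l₂ : List Bool) (i : ℕ) (h : i < l₂.length)
    (hidx : l₁.length + i < (l₁ ++ l₂).length) :
    (l₁ ++ l₂).get ⟨l₁.length + i, hidx⟩ = l₂[i] := by
  simp [List.getElem_append_right]

/-- Lemma (a): every accessible cycle of a transducer computing `flipFun p` has
length divisible by `p`. -/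
theorem flip_cycle_dvd {p : ℕ} (hp : p.Prime) (T : Transducer S)
    (hT : T.Computes (flipFun p)) (u w : List Bool) (hw : w ≠ [])
    (hcyc : T.tStar (T.tStar T.s0 u) w = T.tStar T.s0 u) : p ∣ w.length := by
  set s : S := T.tStar T.s0 u with hs
  set A : List Bool := T.oStar T.s0 u with hA
  set B : List Bool := T.oStar s w with hB
  set m : ℕ := u.length with hm
  set L : ℕ := w.length with hL
  set c : ℕ := A.length with hc
  set b : ℕ := B.length with hb
  have hL1 : 0 < L := by rw [hL]; exact List.length_pos_iff.mpr hw
  clear_value s A B m L c b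
  have hWt : ∀ k, T.tStar T.s0 (u ++ wpow w k) = s := by
    intro k
    induction k with
    | zero => simp [wpow, ← hs]
    | succ k ih =>
      rw [show u ++ wpow w (k+1) = (u ++ wpow w k) ++ w from by
        simp [wpow, List.append_assoc], tStar_append, ih, hcyc]
  have hWo : ∀ k, T.oStar T.s0 (u ++ wpow w k) = A ++ wpow B k := by
    intro k
    induction k with
    | zero => simp [wpow, ← hA]
    | succ k ih =>
      rw [show u ++ wpow w (k+1) = (u ++ wpow w k) ++ w from by
        simp [wpow, List.append_assoc], oStar_append, ih, hWt]
      show _ = A ++ (wpow B k ++ B)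
      rw [List.append_assoc, ← hB]
  have hWlen : ∀ k, (u ++ wpow w k).length = m + k * L := by
    intro k; rw [List.length_append, wpow_length, ← hm, ← hL]
  have hABlen : ∀ k, (A ++ wpow B k).length = c + k * b := by
    intro k; rw [List.length_append, wpow_length, ← hc, ← hb]
  have F1 : ∀ (k : ℕ) (ζ : Cantor) (n : ℕ),
      IsPrefixOf ((A ++ wpow B k) ++ T.oStar s (prefixWord ζ n))
        (flipFun p (prepend (u ++ wpow w k) ζ)) := by
    intro k ζ n
    have h := (hT (prepend (u ++ wpow w k) ζ)).1 ((u ++ wpow w k).length + n)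
    rwa [prefixWord_prepend, oStar_append, hWt, hWo] at h
  have flipW : ∀ (k : ℕ) (ζ : Cantor) (j : ℕ),
      flipFun p (prepend (u ++ wpow w k) ζ) (m + k * L + j) =
        if p ∣ m + k * L + j + 1 then !(ζ j) else ζ j := by
    intro k ζ j
    have h := flip_prepend p (u ++ wpow w k) ζ j
    rwa [hWlen] at h
  have F5 : ∀ (ζ : Cantor) (K : ℕ), ∃ n, K ≤ (T.oStar s (prefixWord ζ n)).length := by
    intro ζ K
    obtain ⟨n', hn'⟩ := (hT (prepend u ζ)).2 (K + c)
    refine ⟨n', ?_⟩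
    have hmono := oStar_prefix_length_mono T T.s0 (prepend u ζ)
      (show n' ≤ u.length + n' by omega)
    rw [prefixWord_prepend, oStar_append, List.length_append, ← hs, ← hA, ← hc] at hmono
    omega
  have F3 : ∀ k, c + k * b ≤ m + k * L := by
    intro k
    by_contra hcon
    push_neg at hcon
    have h0 := F1 k (fun _ => false) 0
    have h1 := F1 k (fun _ => true) 0
    rw [show T.oStar s (prefixWord (fun _ => false) 0) = [] from rfl,
      List.append_nil] at h0
    rw [show T.oStar s (prefixWord (fun _ => true) 0) = [] from rfl,
      List.append_nil] at h1
    have hidx : m + k * L < (A ++ wpow B k).length := by rw [hABlen]; omega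
    have hv : ∀ ζ : Cantor, flipFun p (prepend (u ++ wpow w k) ζ) (m + k * L) =
        if p ∣ m + k * L + 1 then !(ζ 0) else ζ 0 := by
      intro ζ
      have h := flipW k ζ 0
      rwa [Nat.add_zero] at h
    have e := (h0 (m + k * L) hidx).symm.trans (h1 (m + k * L) hidx)
    rw [hv, hv] at e
    rcases Decidable.em (p ∣ m + k * L + 1) with hd | hd <;> simp [hd] at e
  have hcm : c ≤ m := by have := F3 0; omega
  have hbL : b ≤ L := by
    by_contra hcon
    push_neg at hcon
    have h1 := F3 (m + c + 1)
    have h2 : (m + c + 1) * (L + 1) ≤ (m + c + 1) * b :=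
      Nat.mul_le_mul_left _ (by omega)
    have h3 : (m + c + 1) * (L + 1) = (m + c + 1) * L + (m + c + 1) := by ring
    linarith
  have F6 : ∀ (ζ : Cantor) (i k k' : ℕ),
      flipFun p (prepend (u ++ wpow w k) ζ) (c + k * b + i) =
      flipFun p (prepend (u ++ wpow w k') ζ) (c + k' * b + i) := by
    intro ζ i k k'
    obtain ⟨n, hn⟩ := F5 ζ (i + 1)
    have hlenO : i < (T.oStar s (prefixWord ζ n)).length := by omega
    have main : ∀ k : ℕ, flipFun p (prepend (u ++ wpow w k) ζ) (c + k * b + i) =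
        (T.oStar s (prefixWord ζ n))[i] := by
      intro k
      rw [← hABlen k]
      have hidx : (A ++ wpow B k).length + i <
          ((A ++ wpow B k) ++ T.oStar s (prefixWord ζ n)).length := by
        simp only [List.length_append]; omega
      have h := F1 k ζ n ((A ++ wpow B k).length + i) hidx
      rw [← h]
      exact get_append_offset _ _ _ hlenO hidx
    rw [main k, main k']
  have hbeq : b = L := by
    by_contra hne
    have he1 : 0 < L - b := by omega
    have h0ne : (0 : ℕ) ≠ L - b := by omega
    have k0 := F6 (fun j => if j = L - b then false else false)
      ((m - c) + (L - b)) 0 1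
    have k1 := F6 (fun j => if j = L - b then true else false)
      ((m - c) + (L - b)) 0 1
    rw [show c + 0 * b + ((m - c) + (L - b)) = m + 0 * L + (L - b) by omega,
      show c + 1 * b + ((m - c) + (L - b)) = m + 1 * L + 0 by omega,
      flipW, flipW] at k0 k1
    simp [h0ne] at k0 k1
    rcases Decidable.em (p ∣ m + (L - b) + 1) with h1 | h1
    · have h2 := k0.mp h1
      simp [h1, h2] at k1
    · have h2 : ¬ p ∣ m + L + 1 := fun h => h1 (k0.mpr h)
      simp [h1, h2] at k1
  subst hbeq
  have per : ∀ j : ℕ, (p ∣ m + j + 1) ↔ (p ∣ m + b + j + 1) := by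
    intro j
    have key := F6 (fun _ => false) ((m - c) + j) 0 1
    rw [show c + 0 * b + ((m - c) + j) = m + 0 * b + j by omega,
      show c + 1 * b + ((m - c) + j) = m + 1 * b + j by omega,
      flipW, flipW] at key
    simpa using key
  have hmul : m + 2 ≤ p * (m + 2) := Nat.le_mul_of_pos_left _ hp.pos
  have hd1 : p ∣ m + (p * (m + 2) - (m + 1)) + 1 := by
    rw [show m + (p * (m + 2) - (m + 1)) + 1 = p * (m + 2) by omega]
    exact Dvd.intro _ rfl
  have hd2 := (per _).mp hd1
  rw [show m + b + (p * (m + 2) - (m + 1)) + 1 = p * (m + 2) + b by omega] at hd2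
  exact (Nat.dvd_add_right (Dvd.intro _ rfl)).mp hd2

end NFGAux

namespace NFGAux

theorem oblivious_of_mem {p : ℕ} (hp : p.Prime) (M : Submonoid (Cantor ≃ₜ Cantor))
    {f : Cantor ≃ₜ Cantor} (hf : f ∈ boundedGen M (p - 1)) : Oblivious p ⇑f := by
  obtain ⟨l, hl, rfl⟩ := Submonoid.exists_list_of_mem_closure hf
  clear hf
  induction l with
  | nil =>
    have h1 : ⇑(([] : List (Cantor ≃ₜ Cantor)).prod) = id := rfl
    rw [h1]
    exact oblivious_id hp
  | cons g t ih =>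
    obtain ⟨hgM, mg, hmg, Tg, hTg⟩ := hl g List.mem_cons_self
    have ht := ih (fun y hy => hl y (List.mem_cons_of_mem _ hy))
    have hmg' : mg < p := by have := hp.two_le; omega
    have hcomp := oblivious_comp hp ht hmg' Tg hTg
    have h2 : ⇑((g :: t).prod) = ⇑g ∘ ⇑(t.prod) := by
      rw [List.prod_cons]
      funext x
      rfl
    rw [h2]
    exact hcomp

end NFGAux

/-- a submonoid `M` of the rational group containing `f_p` for infinitely
many primes `p` is not finitely generated; indeed `f_p ∉ M_{≤ p-1}` for every prime `p`. -/
theorem submonoid_not_fg (M : Submonoid (Cantor ≃ₜ Cantor))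
    (hMR : ∀ f ∈ M, IsRational f)
    (hinf : {p : ℕ | p.Prime ∧ ∃ fp ∈ M, ∀ ψ : Cantor, fp ψ = flipFun p ψ}.Infinite) :
    (∀ p : ℕ, p.Prime → ∀ fp : Cantor ≃ₜ Cantor, (∀ ψ : Cantor, fp ψ = flipFun p ψ) →
      fp ∉ boundedGen M (p - 1)) ∧ ¬ M.FG := by
  classical
  have part1 : ∀ p : ℕ, p.Prime → ∀ fp : Cantor ≃ₜ Cantor,
      (∀ ψ : Cantor, fp ψ = flipFun p ψ) → fp ∉ boundedGen M (p - 1) := by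
    intro p hpp fp hfp hmem
    have hob := NFGAux.oblivious_of_mem hpp M hmem
    have hco : ⇑fp = flipFun p := funext hfp
    rw [hco] at hob
    obtain ⟨S, hS, T, hT, u, w, hw, hdvd, hcyc⟩ := hob
    exact hdvd (NFGAux.flip_cycle_dvd hpp T hT u w hw hcyc)
  refine ⟨part1, ?_⟩
  intro hFG
  obtain ⟨Sf, hSf⟩ := hFG
  set φ : (Cantor ≃ₜ Cantor) → ℕ := fun f =>
    if h : ∃ n, ∃ T : Transducer (Fin n), T.Computes ⇑f then h.choose else 0 with hφ
  set N : ℕ := Sf.sup φ with hN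
  have hsub : M ≤ boundedGen M N := by
    conv_lhs => rw [← hSf]
    apply Submonoid.closure_le.mpr
    intro x hx
    have hxM : x ∈ M := hSf ▸ Submonoid.subset_closure hx
    obtain ⟨n, T, hT⟩ := hMR x hxM
    have hex : ∃ n, ∃ T : Transducer (Fin n), T.Computes ⇑x := ⟨n, T, hT⟩
    have hφx : ∃ T : Transducer (Fin (φ x)), T.Computes ⇑x := by
      have h1 : φ x = hex.choose := by rw [hφ]; simp only [dif_pos hex]
      rw [h1]
      exact hex.choose_spec
    have hle : φ x ≤ N := Finset.le_sup hx
    exact Submonoid.subset_closure ⟨hxM, φ x, hle, hφx⟩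
  obtain ⟨p, hpmem, hpgt⟩ := hinf.exists_gt (N + 1)
  obtain ⟨hpp, fp, hfpM, hfp⟩ := hpmem
  have hmono : boundedGen M N ≤ boundedGen M (p - 1) := by
    apply Submonoid.closure_mono
    intro f hf
    obtain ⟨hfM, mm, hmm, hT⟩ := hf
    exact ⟨hfM, mm, by omega, hT⟩
  exact part1 p hpp fp hfp (hmono (hsub hfpM))
end

section
/- The asynchronous rational group R is not finitely generated. -/
namespace NotFG

open List

abbrev zeros (k : ℕ) : List Bool := List.replicate k false

lemma prepend_lt (α : List Bool) (ψ : Cantor) {n : ℕ} (h : n < α.length) :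
    prepend α ψ n = α.get ⟨n, h⟩ := dif_pos h

lemma prepend_ge (α : List Bool) (ψ : Cantor) {n : ℕ} (h : ¬ n < α.length) :
    prepend α ψ n = ψ (n - α.length) := dif_neg h

lemma prepend_length_add (α : List Bool) (ψ : Cantor) (m : ℕ) :
    prepend α ψ (α.length + m) = ψ m := by
  rw [prepend_ge α ψ (by omega)]
  congr 1
  omega

lemma prefixWord_length (ψ : Cantor) (n : ℕ) : (prefixWord ψ n).length = n := by
  simp [prefixWord]

lemma prefixWord_zero (ψ : Cantor) : prefixWord ψ 0 = [] := rfl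

lemma prefixWord_succ (ψ : Cantor) (n : ℕ) :
    prefixWord ψ (n + 1) = prefixWord ψ n ++ [ψ n] := by
  simp [prefixWord, List.range_succ]

lemma prefixWord_add (ψ : Cantor) (a b : ℕ) :
    prefixWord ψ (a + b) = prefixWord ψ a ++ (List.range b).map (fun i => ψ (a + i)) := by
  simp [prefixWord, List.range_add, Function.comp]

lemma prefixWord_getElem (ψ : Cantor) (n i : ℕ) (h : i < (prefixWord ψ n).length) :
    (prefixWord ψ n)[i] = ψ i := by
  simp [prefixWord]

lemma isPrefixOf_getElem {l : List Bool} {ψ : Cantor} (h : IsPrefixOf l ψ) (i : ℕ)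
    (hi : i < l.length) : l[i] = ψ i := by
  simpa [List.get_eq_getElem] using h i hi

lemma prefixWord_isPrefixOf (ψ : Cantor) (n : ℕ) : IsPrefixOf (prefixWord ψ n) ψ := by
  intro i h
  simp [List.get_eq_getElem, prefixWord_getElem]

lemma prefixWord_prepend (A : List Bool) (ζ : Cantor) (n : ℕ) :
    prefixWord (prepend A ζ) (A.length + n) = A ++ prefixWord ζ n := by
  induction n with
  | zero =>
      rw [prefixWord_zero, List.append_nil]
      apply List.ext_getElem
      · simp [prefixWord_length]
      · intro i h1 h2
        rw [prefixWord_getElem _ _ _ h1, prepend_lt A ζ (by simpa using h2)]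
        simp [List.get_eq_getElem]
  | succ n ih =>
      have h1 : A.length + (n + 1) = (A.length + n) + 1 := by omega
      rw [h1, prefixWord_succ, ih, prefixWord_succ, prepend_length_add, List.append_assoc]

def wpow (C : List Bool) : ℕ → List Bool
  | 0 => []
  | m + 1 => wpow C m ++ C

lemma wpow_add (C : List Bool) (a b : ℕ) : wpow C (a + b) = wpow C a ++ wpow C b := by
  induction b with
  | zero => simp [wpow]
  | succ b ih => rw [show a + (b+1) = (a+b) + 1 from rfl, wpow, ih, wpow, List.append_assoc]

lemma wpow_one (C : List Bool) : wpow C 1 = C := by simp [wpow]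

lemma wpow_nil (m : ℕ) : wpow [] m = [] := by
  induction m with
  | zero => rfl
  | succ m ih => simp [wpow, ih]

lemma wpow_false (m : ℕ) : wpow [false] m = zeros m := by
  induction m with
  | zero => rfl
  | succ m ih =>
      rw [wpow, ih]
      simp [zeros, List.replicate_succ']

lemma wpow_length (C : List Bool) (m : ℕ) : (wpow C m).length = m * C.length := by
  induction m with
  | zero => simp [wpow]
  | succ m ih => rw [wpow, List.length_append, ih]; ring

namespace TransducerLemmas

variable {S : Type} (T : Transducer S)

lemma tStar_append (s : S) (X Y : List Bool) :
    T.tStar s (X ++ Y) = T.tStar (T.tStar s X) Y := by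
  induction X generalizing s with
  | nil => rfl
  | cons b X ih => simp [Transducer.tStar, ih]

lemma oStar_append (s : S) (X Y : List Bool) :
    T.oStar s (X ++ Y) = T.oStar s X ++ T.oStar (T.tStar s X) Y := by
  induction X generalizing s with
  | nil => rfl
  | cons b X ih => simp [Transducer.oStar, Transducer.tStar, ih]

lemma oStar_len_mono (s : S) (ψ : Cantor) {n n' : ℕ} (h : n ≤ n') :
    (T.oStar s (prefixWord ψ n)).length ≤ (T.oStar s (prefixWord ψ n')).length := by
  obtain ⟨b, rfl⟩ : ∃ b, n' = n + b := ⟨n' - n, by omega⟩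
  rw [prefixWord_add, oStar_append, List.length_append]
  omega

variable (f : Cantor → Cantor) (hT : T.Computes f)

include hT

lemma run_digit (A : List Bool) (ζ : Cantor) (n m : ℕ)
    (h : m < (T.oStar (T.tStar T.s0 A) (prefixWord ζ n)).length) :
    f (prepend A ζ) ((T.oStar T.s0 A).length + m)
      = (T.oStar (T.tStar T.s0 A) (prefixWord ζ n))[m] := by
  have h1 : prefixWord (prepend A ζ) (A.length + n) = A ++ prefixWord ζ n :=
    prefixWord_prepend A ζ n
  have h2 := (hT (prepend A ζ)).1 (A.length + n)
  rw [h1, oStar_append] at h2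
  have h3 := isPrefixOf_getElem h2 ((T.oStar T.s0 A).length + m)
    (by rw [List.length_append]; omega)
  rw [List.getElem_append_right (by omega)] at h3
  rw [← h3]
  congr 1
  omega

lemma lengths_unbounded (A : List Bool) (ζ : Cantor) (k : ℕ) :
    ∃ n, k ≤ (T.oStar (T.tStar T.s0 A) (prefixWord ζ n)).length := by
  obtain ⟨n0, hn0⟩ := (hT (prepend A ζ)).2 (k + (T.oStar T.s0 A).length)
  refine ⟨max n0 A.length - A.length, ?_⟩
  have h1 : n0 ≤ A.length + (max n0 A.length - A.length) := by omega
  have h2 := oStar_len_mono T T.s0 (prepend A ζ) h1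
  rw [prefixWord_prepend, oStar_append, List.length_append] at h2
  omega

lemma strip_repr (A : List Bool) (ζ : Cantor) :
    f (prepend A ζ)
      = prepend (T.oStar T.s0 A) (fun m => f (prepend A ζ) ((T.oStar T.s0 A).length + m)) := by
  funext n
  by_cases h : n < (T.oStar T.s0 A).length
  · rw [prepend_lt _ _ h]
    have hpw : prefixWord (prepend A ζ) A.length = A := by
      have := prefixWord_prepend A ζ 0
      simpa [prefixWord_zero] using this
    have h2 := (hT (prepend A ζ)).1 A.length
    rw [hpw] at h2
    exact (h2 n h).symm
  · rw [prepend_ge _ _ h]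
    congr 1
    omega

lemma strip_eq (A A' : List Bool) (hs : T.tStar T.s0 A = T.tStar T.s0 A') (ζ : Cantor) (m : ℕ) :
    f (prepend A ζ) ((T.oStar T.s0 A).length + m)
      = f (prepend A' ζ) ((T.oStar T.s0 A').length + m) := by
  obtain ⟨n, hn⟩ := lengths_unbounded T f hT A ζ (m + 1)
  have h1 := run_digit T f hT A ζ n m (by omega)
  have h2 := run_digit T f hT A' ζ n m (by rw [← hs]; omega)
  rw [h1, h2]
  exact List.getElem_of_eq (by rw [hs]) _

end TransducerLemmas

end NotFG

namespace NotFG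

lemma flip_invol (p : ℕ) (ψ : Cantor) : flipFun p (flipFun p ψ) = ψ := by
  funext n
  by_cases h : p ∣ n + 1 <;> simp [flipFun, h]

lemma flip_continuous (p : ℕ) : Continuous (flipFun p) := by
  refine continuous_pi fun n => ?_
  by_cases h : p ∣ n + 1 <;> simp only [flipFun, h, if_true, if_false]
  · show Continuous fun ψ : Cantor => (fun b : Bool => !b) (ψ n)
    exact Continuous.comp (continuous_of_discreteTopology (f := Bool.not)) (continuous_apply n)
  · exact continuous_apply n

def flipHomeo (p : ℕ) : Cantor ≃ₜ Cantor where
  toFun := flipFun p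
  invFun := flipFun p
  left_inv := flip_invol p
  right_inv := flip_invol p
  continuous_toFun := flip_continuous p
  continuous_invFun := flip_continuous p

lemma flipHomeo_coe (p : ℕ) : ⇑(flipHomeo p) = flipFun p := rfl

lemma succ_mod (n p : ℕ) : (n % p + 1) % p = (n + 1) % p := by
  rw [Nat.add_mod n 1, Nat.add_mod (n % p) 1, Nat.mod_mod_of_dvd n dvd_rfl]

lemma mod_pred_iff {p : ℕ} (hp : 0 < p) (n : ℕ) : n % p = p - 1 ↔ p ∣ (n + 1) := by
  rw [Nat.dvd_iff_mod_eq_zero]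
  have h1 : n % p < p := Nat.mod_lt _ hp
  rw [← succ_mod n p]
  constructor
  · intro h
    rw [h, show p - 1 + 1 = p from by omega, Nat.mod_self]
  · intro h
    rcases eq_or_lt_of_le (Nat.succ_le_of_lt h1) with h4 | h4
    · omega
    · rw [Nat.mod_eq_of_lt h4] at h
      omega

def flipT (p : ℕ) (hp : 0 < p) : Transducer (Fin p) where
  s0 := ⟨0, hp⟩
  t s _ := ⟨(s + 1) % p, Nat.mod_lt _ hp⟩
  o s b := [if (s : ℕ) = p - 1 then !b else b]

lemma flipT_tStar (p : ℕ) (hp : 0 < p) (ψ : Cantor) (n : ℕ) :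
    (flipT p hp).tStar (flipT p hp).s0 (prefixWord ψ n) = ⟨n % p, Nat.mod_lt _ hp⟩ := by
  induction n with
  | zero =>
      apply Fin.ext
      simp [flipT, prefixWord_zero, Transducer.tStar]
  | succ n ih =>
      rw [prefixWord_succ, TransducerLemmas.tStar_append, ih]
      apply Fin.ext
      simp only [flipT, Transducer.tStar]
      exact succ_mod n p

lemma flipT_oStar (p : ℕ) (hp : 0 < p) (ψ : Cantor) (n : ℕ) :
    (flipT p hp).oStar (flipT p hp).s0 (prefixWord ψ n) = prefixWord (flipFun p ψ) n := by
  induction n with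
  | zero => rfl
  | succ n ih =>
      rw [prefixWord_succ, TransducerLemmas.oStar_append, ih, flipT_tStar,
        prefixWord_succ (flipFun p ψ)]
      congr 1
      simp only [flipT, Transducer.oStar, Transducer.tStar, List.append_nil]
      congr 1
      rw [flipFun]
      by_cases h : p ∣ n + 1
      · rw [if_pos ((mod_pred_iff hp n).mpr h), if_pos h]
      · rw [if_neg (fun hc => h ((mod_pred_iff hp n).mp hc)), if_neg h]

lemma flipT_computes (p : ℕ) (hp : 0 < p) : (flipT p hp).Computes ⇑(flipHomeo p) := by
  intro ψ
  constructor
  · intro n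
    rw [flipT_oStar, flipHomeo_coe]
    exact prefixWord_isPrefixOf _ _
  · intro k
    exact ⟨k, by rw [flipT_oStar, prefixWord_length]⟩

end NotFG

namespace NotFG

open TransducerLemmas

lemma map_getD_range : ∀ (L : List Bool),
    (List.range L.length).map (fun r => L.getD r false) = L
  | [] => rfl
  | a :: L => by
      rw [List.length_cons, List.range_succ_eq_map, List.map_cons, List.map_map]
      have h1 : ((fun r => (a :: L).getD r false) ∘ Nat.succ) = fun r => L.getD r false := by
        funext r
        simp [List.getD_cons_succ]
      rw [h1, map_getD_range L]
      simp

lemma prefixWord_per (C : List Bool) (hC : 0 < C.length) (s : ℕ) :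
    prefixWord (fun m => C.getD (m % C.length) false) (C.length * s) = wpow C s := by
  induction s with
  | zero => rfl
  | succ s ih =>
      have h1 : C.length * (s + 1) = C.length * s + C.length := by ring
      rw [h1, prefixWord_add, ih, wpow]
      congr 1
      have h2 : ∀ r ∈ List.range C.length,
          (fun i => C.getD ((C.length * s + i) % C.length) false) r
            = (fun r => C.getD r false) r := by
        intro r hr
        rw [List.mem_range] at hr
        simp only []
        rw [Nat.mul_add_mod, Nat.mod_eq_of_lt hr]
      rw [List.map_congr_left h2, map_getD_range]

lemma one_apply (x : Cantor) : (1 : Cantor ≃ₜ Cantor) x = x := rfl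

lemma mul_apply (f g : Cantor ≃ₜ Cantor) (x : Cantor) : (f * g) x = f (g x) := rfl

lemma main_claim (N : ℕ) (l : List (Cantor ≃ₜ Cantor))
    (hl : ∀ y ∈ l, ∃ n, n ≤ N ∧ ∃ T : Transducer (Fin n), T.Computes ⇑y) :
    ∃ (k d : ℕ) (A C : List Bool) (Φ : Cantor → Cantor),
      1 ≤ d ∧ (∀ q, Nat.Prime q → q ∣ d → q ≤ N) ∧ 1 ≤ C.length ∧
      ∀ (m : ℕ) (ψ : Cantor),
        (l.prod : Cantor ≃ₜ Cantor) (prepend (zeros (k + d * m)) ψ)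
          = prepend (A ++ wpow C m) (Φ ψ) := by
  induction l with
  | nil =>
      refine ⟨0, 1, [], [false], id, le_refl 1, ?_, by simp, ?_⟩
      · intro q hq hd
        exact absurd (Nat.dvd_one.mp hd) hq.ne_one
      · intro m ψ
        have h1 : 0 + 1 * m = m := by omega
        rw [List.prod_nil, one_apply, List.nil_append, wpow_false, h1]
        rfl
  | cons y t ih =>
      obtain ⟨k, d, A, C, Φ, hd1, hdp, hC1, hrep⟩ :=
        ih (fun z hz => hl z (List.mem_cons_of_mem _ hz))
      obtain ⟨n, hnN, T, hT⟩ := hl y List.mem_cons_self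
      set u : ℕ → Fin n := fun m => T.tStar T.s0 (A ++ wpow C m) with hu
      -- pigeonhole
      have hcard : Fintype.card (Fin n) < Fintype.card (Fin (n + 1)) := by simp
      obtain ⟨x1, x2, hne, heq⟩ :=
        Fintype.exists_ne_map_eq_of_card_lt (fun x : Fin (n + 1) => u x) hcard
      have key : ∃ i j : ℕ, i < j ∧ j ≤ n ∧ u i = u j := by
        rcases lt_trichotomy (x1 : ℕ) (x2 : ℕ) with h | h | h
        · exact ⟨x1, x2, h, x2.is_le, heq⟩
        · exact absurd (Fin.ext h) hne
        · exact ⟨x2, x1, h, x1.is_le, heq.symm⟩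
      obtain ⟨i, j, hij, hjn, hui⟩ := key
      set e := j - i with he
      have he1 : 1 ≤ e := by omega
      have heN : e ≤ N := le_trans (by omega) hnN
      have ustep : ∀ a b, u (a + b) = T.tStar (u a) (wpow C b) := by
        intro a b
        rw [hu]
        simp only [wpow_add, ← List.append_assoc, tStar_append]
      have ustat : ∀ s, u (i + e * s) = u i := by
        intro s
        induction s with
        | zero => simp
        | succ s ihs =>
            have h1 : i + e * (s + 1) = (i + e * s) + e := by ring
            rw [h1, ustep, ihs, ← ustep, show i + e = j from by omega, ← hui]
      set A' := T.oStar T.s0 (A ++ wpow C i) with hA'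
      set C' := T.oStar (u i) (wpow C e) with hC'
      have ostat : ∀ s, T.oStar T.s0 (A ++ wpow C (i + e * s)) = A' ++ wpow C' s := by
        intro s
        induction s with
        | zero => simp [wpow, hA']
        | succ s ihs =>
            have h1 : i + e * (s + 1) = (i + e * s) + e := by ring
            rw [h1, wpow_add, ← List.append_assoc, oStar_append, ihs]
            have h2 : T.tStar T.s0 (A ++ wpow C (i + e * s)) = u i := ustat s
            rw [h2, wpow, ← List.append_assoc]
      -- C' is nonempty
      have hC'1 : 1 ≤ C'.length := by
        by_contra hc
        have hC0 : C' = [] := List.length_eq_zero_iff.mp (by omega)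
        set ζ : Cantor := fun m => C.getD (m % C.length) false with hζ
        have hBND : ∀ nn : ℕ,
            (T.oStar T.s0 (prefixWord (prepend (A ++ wpow C i) ζ) nn)).length
              ≤ A'.length := by
          intro nn
          have hle : nn ≤ (A ++ wpow C i).length + C.length * (e * nn) := by
            have h3a : nn ≤ e * nn := Nat.le_mul_of_pos_left nn (by omega)
            have h3b : e * nn ≤ C.length * (e * nn) :=
              Nat.le_mul_of_pos_left (e * nn) (by omega)
            omega
          refine le_trans (oStar_len_mono T T.s0 _ hle) ?_
          rw [prefixWord_prepend, prefixWord_per C (by omega), oStar_append]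
          have h4 : T.oStar (T.tStar T.s0 (A ++ wpow C i)) (wpow C (e * nn))
              = wpow C' nn := by
            have h5 := ostat nn
            rw [wpow_add, ← List.append_assoc, oStar_append] at h5
            exact List.append_cancel_left h5
          rw [h4, hC0, wpow_nil, List.length_append, List.length_nil, hA']
          omega
        obtain ⟨n0, hn0⟩ := (hT (prepend (A ++ wpow C i) ζ)).2 (A'.length + 1)
        have := hBND n0
        omega
      refine ⟨k + d * i, d * e, A', C',
        fun ψ m => y (prepend (A ++ wpow C i) (Φ ψ)) (A'.length + m),
        Nat.mul_pos (by omega) (by omega), ?_, hC'1, ?_⟩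
      · intro q hq hdq
        rcases (Nat.Prime.dvd_mul hq).mp hdq with h | h
        · exact hdp q hq h
        · exact le_trans (Nat.le_of_dvd (by omega) h) heN
      · intro s ψ
        have harg : k + d * i + d * e * s = k + d * (i + e * s) := by ring
        rw [harg, List.prod_cons, mul_apply, hrep (i + e * s) ψ]
        have hfun : (fun m => (⇑y : Cantor → Cantor) (prepend (A ++ wpow C (i + e * s)) (Φ ψ))
                ((T.oStar T.s0 (A ++ wpow C (i + e * s))).length + m))
            = fun m => (⇑y : Cantor → Cantor) (prepend (A ++ wpow C i) (Φ ψ))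
                ((T.oStar T.s0 (A ++ wpow C i)).length + m) :=
          funext fun m => strip_eq T ⇑y hT _ _ (ustat s) (Φ ψ) m
        rw [strip_repr T ⇑y hT (A ++ wpow C (i + e * s)) (Φ ψ), hfun, ostat s]

end NotFG

namespace NotFG

lemma flip_val (p K : ℕ) (ψ : Cantor) (n : ℕ) (h : K ≤ n) :
    flipFun p (prepend (zeros K) ψ) n
      = if p ∣ n + 1 then !(ψ (n - K)) else ψ (n - K) := by
  have h1 : prepend (zeros K) ψ n = ψ (n - K) := by
    rw [prepend_ge _ _ (by simp [zeros]; omega)]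
    simp [zeros]
  simp only [flipFun, h1]

lemma endgame {p : ℕ} (hp : 0 < p) (k d : ℕ) (A C : List Bool) (Φ : Cantor → Cantor)
    (h0 : ∀ ψ, flipFun p (prepend (zeros k) ψ) = prepend A (Φ ψ))
    (h1 : ∀ ψ, flipFun p (prepend (zeros (k + d)) ψ) = prepend (A ++ C) (Φ ψ)) :
    p ∣ d := by
  set a := A.length with ha
  set c := C.length with hc
  have e0 : ∀ ψ m, Φ ψ m = flipFun p (prepend (zeros k) ψ) (a + m) := by
    intro ψ m
    rw [h0 ψ, prepend_length_add]
  have e1 : ∀ ψ m, Φ ψ m = flipFun p (prepend (zeros (k + d)) ψ) ((a + c) + m) := by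
    intro ψ m
    rw [h1 ψ, ← (List.length_append : (A ++ C).length = A.length + C.length), prepend_length_add]
  set M := a + k + d + 2 with hM
  have hpM : M ≤ p * M := Nat.le_mul_of_pos_left M hp
  set m := p * M - a - 1 with hm
  have hm1 : a + m + 1 = p * M := by omega
  have hmk : k + d ≤ m := by omega
  -- Step A : p ∣ c
  have hdiv1 : p ∣ a + m + 1 := by rw [hm1]; exact dvd_mul_right p M
  have hA := (e0 (fun _ => false) m).symm.trans (e1 (fun _ => false) m)
  rw [flip_val p k _ (a + m) (by omega),
    flip_val p (k + d) _ ((a + c) + m) (by omega), if_pos hdiv1] at hA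
  have hdiv2 : p ∣ (a + c) + m + 1 := by
    by_contra h2
    rw [if_neg h2] at hA
    simp at hA
  have hpc : p ∣ c := by
    have h3 := Nat.dvd_sub hdiv2 hdiv1
    rwa [show (a + c) + m + 1 - (a + m + 1) = c from by omega] at h3
  -- Step B : c = d
  set ψ1 : Cantor := fun x => decide (x = a + m - k) with hψ1
  have hB := (e0 ψ1 m).symm.trans (e1 ψ1 m)
  rw [flip_val p k _ (a + m) (by omega),
    flip_val p (k + d) _ ((a + c) + m) (by omega), if_pos hdiv1, if_pos hdiv2] at hB
  have hB2 : ψ1 (a + m - k) = ψ1 ((a + c) + m - (k + d)) := by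
    exact Bool.not_inj hB
  rw [hψ1] at hB2
  simp only [decide_eq_true_eq] at hB2
  have hcd : c = d := by
    have h4 : (a + c) + m - (k + d) = a + m - k := by
      by_contra h5
      rw [decide_eq_false h5] at hB2
      simp at hB2
    omega
  rw [← hcd]
  exact hpc

end NotFG

open NotFG TransducerLemmas in
theorem rational_group_not_fg' (R : Subgroup (Cantor ≃ₜ Cantor))
    (hR : ∀ f : Cantor ≃ₜ Cantor, f ∈ R ↔ IsRational f) :
    ¬ Group.FG ↥R := by
  intro hFG
  classical
  obtain ⟨S, hScl, hSfin⟩ := Group.fg_iff.mp hFG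
  set S' : Set (Cantor ≃ₜ Cantor) := (fun z : ↥R => (z : Cantor ≃ₜ Cantor)) '' S with hS'
  have hS'fin : S'.Finite := hSfin.image _
  have hS'R : ∀ g ∈ S', g ∈ R := by
    rintro g ⟨z, _, rfl⟩
    exact z.2
  set ν : (Cantor ≃ₜ Cantor) → ℕ := fun g => if h : IsRational g then h.choose else 0 with hν
  have hνT : ∀ g, g ∈ R → ∃ T : Transducer (Fin (ν g)), T.Computes ⇑g := by
    intro g hg
    have h : IsRational g := (hR g).mp hg
    have hg2 : ν g = h.choose := by
      simp only [hν]
      exact dif_pos h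
    rw [hg2]
    exact h.choose_spec
  set N : ℕ := hS'fin.toFinset.sup (fun g => max (ν g) (ν g⁻¹)) with hN
  obtain ⟨p, hpN, hpp⟩ := Nat.exists_infinite_primes (N + 1)
  have hp : p.Prime := hpp
  have hp0 : 0 < p := hp.pos
  have hfpR : flipHomeo p ∈ R := (hR _).mpr ⟨p, flipT p hp0, flipT_computes p hp0⟩
  -- express flipHomeo p as a product of a list of generators and inverses
  have hmemS : (⟨flipHomeo p, hfpR⟩ : ↥R) ∈ Subgroup.closure S := by
    rw [hScl]; exact Subgroup.mem_top _
  have hmem' : flipHomeo p ∈ Subgroup.closure S' := by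
    refine Subgroup.closure_induction
      (p := fun z _ => ((z : ↥R) : Cantor ≃ₜ Cantor) ∈ Subgroup.closure S')
      ?_ ?_ ?_ ?_ hmemS
    · intro x hx
      exact Subgroup.subset_closure ⟨x, hx, rfl⟩
    · exact Subgroup.one_mem _
    · intro x y _ _ hx hy
      exact Subgroup.mul_mem _ hx hy
    · intro x _ hx
      exact Subgroup.inv_mem _ hx
  have hmono : flipHomeo p ∈ Submonoid.closure (S' ∪ S'⁻¹) := by
    rw [← Subgroup.closure_toSubmonoid]
    exact hmem'
  obtain ⟨L, hLmem, hLprod⟩ := Submonoid.exists_list_of_mem_closure hmono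
  have hLbound : ∀ y ∈ L, ∃ n, n ≤ N ∧ ∃ T : Transducer (Fin n), T.Computes ⇑y := by
    intro y hy
    rcases hLmem y hy with h | h
    · have hyR : y ∈ R := hS'R y h
      refine ⟨ν y, ?_, hνT y hyR⟩
      exact le_trans (le_max_left _ _)
        (Finset.le_sup (f := fun g => max (ν g) (ν g⁻¹)) (hS'fin.mem_toFinset.mpr h))
    · have h' : y⁻¹ ∈ S' := Set.mem_inv.mp h
      have hyR : y ∈ R := by
        have h2 := R.inv_mem (hS'R _ h')
        rwa [inv_inv] at h2
      refine ⟨ν y, ?_, hνT y hyR⟩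
      have h3 : max (ν y⁻¹) (ν (y⁻¹)⁻¹) ≤ N :=
        Finset.le_sup (f := fun g => max (ν g) (ν g⁻¹)) (hS'fin.mem_toFinset.mpr h')
      rw [inv_inv] at h3
      exact le_trans (le_max_right _ _) h3
  obtain ⟨k, d, A, C, Φ, hd1, hdp, hC1, hrep⟩ := main_claim N L hLbound
  rw [hLprod] at hrep
  have h0 : ∀ ψ, flipFun p (prepend (zeros k) ψ) = prepend A (Φ ψ) := by
    intro ψ
    have := hrep 0 ψ
    rwa [flipHomeo_coe, show k + d * 0 = k from by omega, show wpow C 0 = [] from rfl,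
      List.append_nil] at this
  have h1 : ∀ ψ, flipFun p (prepend (zeros (k + d)) ψ) = prepend (A ++ C) (Φ ψ) := by
    intro ψ
    have := hrep 1 ψ
    rwa [flipHomeo_coe, show k + d * 1 = k + d from by omega, wpow_one] at this
  have hpd : p ∣ d := endgame hp0 k d A C Φ h0 h1
  have := hdp p hp hpd
  omega


/-- the asynchronous rational group `R` is not finitely generated. -/
theorem rational_group_not_fg (R : Subgroup (Cantor ≃ₜ Cantor))
    (hR : ∀ f : Cantor ≃ₜ Cantor, f ∈ R ↔ IsRational f) :
    ¬ Group.FG ↥R := rational_group_not_fg' R hR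
end
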